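/- arXiv:2010.02070 — 5 statements merged into one kernel-verified Lean document; each statement's English description precedes it below -/
import Mathlib

section
/- Let L ≅ Sym(3) be the permutation group induced by the action of Sym(3) on the set of ordered pairs of distinct elements of {1,2,3}, and let (Γ,G) be a locally L pair. Then for every vertex x of Γ, the pointwise stabiliser G_x^{[1]} of the ball of radius 1 around x is trivial. -/
open MulAction Pointwise

/-- The set of ordered pairs of distinct elements of `{1,…,n}`. -/
abbrev OPairs (n : ℕ) : Type := {p : Fin n × Fin n // p.1 ≠ p.2}

/-- `Sym(n)` acts on the ordered pairs of distinct elements. -/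
instance opairsAction (n : ℕ) : MulAction (Equiv.Perm (Fin n)) (OPairs n) where
  smul σ p := ⟨(σ p.1.1, σ p.1.2), fun h => p.2 (σ.injective h)⟩
  one_smul p := rfl
  mul_smul σ τ p := rfl

/-- Every element of `G` is an automorphism of `Γ`. -/
def PreservesAdj {V : Type*} (Γ : SimpleGraph V) (G : Subgroup (Equiv.Perm V)) : Prop :=
  ∀ g ∈ G, ∀ u v : V, Γ.Adj u v ↔ Γ.Adj (g u) (g v)

/-- The pointwise stabiliser in `G` of the ball of radius `i` around `x`. -/
def ballStab {V : Type*} (Γ : SimpleGraph V) (G : Subgroup (Equiv.Perm V)) (x : V) (i : ℕ) :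
    Subgroup G :=
  ⨅ (v : V) (_ : Γ.dist x v ≤ i), MulAction.stabilizer G v

/-- `(Γ, G)` is a locally `L` pair, for `L` the permutation group induced by `Sym(n)` on
ordered pairs of distinct elements of `{1,…,n}`. -/
def IsLocallyOPairs (n : ℕ) {V : Type*} (Γ : SimpleGraph V) (G : Subgroup (Equiv.Perm V)) :
    Prop :=
  PreservesAdj Γ G ∧ MulAction.IsPretransitive G V ∧
  ∀ x : V, ∃ (e : Γ.neighborSet x ≃ OPairs n)
      (φ : MulAction.stabilizer G x →* Equiv.Perm (Fin n)),
    Function.Surjective φ ∧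
    ∀ (g : MulAction.stabilizer G x) (v : Γ.neighborSet x),
      ((e.symm (φ g • e v) : Γ.neighborSet x) : V) = g • (v : V)


private lemma opairs_regular (σ : Equiv.Perm (Fin 3)) (p : OPairs 3) (h : σ • p = p) :
    σ = 1 := by
  revert h; revert p; revert σ; decide

/-- For the permutation group `L ≅ Sym(3)` acting on ordered pairs of distinct
elements of `{1,2,3}` and any locally `L` pair `(Γ,G)`, the pointwise stabiliser of the
ball of radius one around any vertex is trivial. -/
theorem stmt_0 {V : Type*} [Fintype V] (Γ : SimpleGraph V) (hconn : Γ.Connected)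
    (G : Subgroup (Equiv.Perm V)) (hloc : IsLocallyOPairs 3 Γ G) (x : V) :
    ballStab Γ G x 1 = ⊥ := by
  rw [eq_bot_iff]
  intro g hg
  obtain ⟨hadj, htrans, hlocal⟩ := hloc
  -- membership in the ball stabiliser unpacked
  have hfix : ∀ v : V, Γ.dist x v ≤ 1 → (g : Equiv.Perm V) v = v := by
    intro v hv
    have := (Subgroup.mem_iInf.mp hg v)
    have := (Subgroup.mem_iInf.mp this hv)
    exact this
  -- the key step: if g fixes u and one neighbour of u, then it fixes all neighbours
  have step : ∀ u : V, (g : Equiv.Perm V) u = u →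
      (∃ w, Γ.Adj u w ∧ (g : Equiv.Perm V) w = w) →
      ∀ z, Γ.Adj u z → (g : Equiv.Perm V) z = z := by
    intro u hu ⟨w, hw, hgw⟩ z hz
    obtain ⟨e, φ, -, hcompat⟩ := hlocal u
    have hgu : g ∈ MulAction.stabilizer G u := by
      exact hu
    set g' : MulAction.stabilizer G u := ⟨g, hgu⟩ with hg'
    have hw' : w ∈ Γ.neighborSet u := hw
    have hz' : z ∈ Γ.neighborSet u := hz
    have h1 := hcompat g' ⟨w, hw'⟩
    have hsw : (g' • ((⟨w, hw'⟩ : Γ.neighborSet u) : V)) = w := hgw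
    rw [hsw] at h1
    have h2 : e.symm (φ g' • e ⟨w, hw'⟩) = ⟨w, hw'⟩ := Subtype.ext h1
    have h3 : φ g' • e ⟨w, hw'⟩ = e ⟨w, hw'⟩ := by
      have := congrArg e h2
      simpa using this
    have hφ : φ g' = 1 := opairs_regular _ _ h3
    have h4 := hcompat g' ⟨z, hz'⟩
    rw [hφ, one_smul, Equiv.symm_apply_apply] at h4
    exact h4.symm
  -- propagate along walks from x
  have main : ∀ (u v : V), Γ.Walk u v →
      ((g : Equiv.Perm V) u = u ∧ ∀ z, Γ.Adj u z → (g : Equiv.Perm V) z = z) →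
      ((g : Equiv.Perm V) v = v ∧ ∀ z, Γ.Adj v z → (g : Equiv.Perm V) z = z) := by
    intro u v p
    induction p with
    | nil => exact id
    | cons h q ih =>
      intro ⟨ha, hnb⟩
      have hb := hnb _ h
      exact ih ⟨hb, step _ hb ⟨_, h.symm, ha⟩⟩
  -- g fixes x and its neighbours
  have hx : (g : Equiv.Perm V) x = x := hfix x (by simp [SimpleGraph.dist_self])
  have hnx : ∀ z, Γ.Adj x z → (g : Equiv.Perm V) z = z := by
    intro z hz
    exact hfix z (le_of_eq (SimpleGraph.dist_eq_one_iff_adj.mpr hz))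
  -- conclude
  have hall : ∀ v : V, (g : Equiv.Perm V) v = v := by
    intro v
    obtain ⟨p⟩ := hconn x v
    exact (main x v p ⟨hx, hnx⟩).1
  have : (g : Equiv.Perm V) = 1 := Equiv.ext hall
  exact Subgroup.mem_bot.mpr (Subtype.ext this)
end

section
/- (Hauptlemma) Let Γ be a finite connected simple graph and G ≤ Aut(Γ) a vertex-transitive group such that for every vertex v the stabiliser G_v is transitive on Γ(v). Let {x,y} be an edge of Γ, let G_e denote its setwise stabiliser, and let G_{xy} = G_x ∩ G_y. If K is a subgroup of G_{xy} that is normal in G_e and such that the normaliser N_{G_x}(K) is transitive on Γ(x), then K = 1. -/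
open MulAction Pointwise

section Aux

variable {V : Type*} (Γ : SimpleGraph V) (G : Subgroup (Equiv.Perm V)) (K : Subgroup G)

def GoodEdge (u v : V) : Prop :=
  Γ.Adj u v ∧
  K ≤ MulAction.stabilizer G u ⊓ MulAction.stabilizer G v ∧
  (∀ g ∈ MulAction.stabilizer G ({u, v} : Set V), ∀ k ∈ K, g * k * g⁻¹ ∈ K) ∧
  (∀ a ∈ Γ.neighborSet u, ∀ b ∈ Γ.neighborSet u,
    ∃ g ∈ Subgroup.normalizer (K : Set G) ⊓ MulAction.stabilizer G u, g • a = b)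

variable {Γ G K}

lemma adj_smulG (hadj : PreservesAdj Γ G) (g : G) {u v : V} (h : Γ.Adj u v) :
    Γ.Adj (g • u) (g • v) := (hadj g g.2 u v).mp h

lemma goodEdge_smul (hadj : PreservesAdj Γ G) {u v : V} {g : G}
    (hg : g ∈ Subgroup.normalizer (K : Set G)) (h : GoodEdge Γ G K u v) :
    GoodEdge Γ G K (g • u) (g • v) := by
  obtain ⟨h1, h2, h3, h4⟩ := h
  have hgK : ∀ k : G, k ∈ K ↔ g * k * g⁻¹ ∈ K := Subgroup.mem_normalizer_iff.mp hg
  have hconj : ∀ k ∈ K, g⁻¹ * k * g ∈ K := by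
    intro k hk
    have heq : g * (g⁻¹ * k * g) * g⁻¹ = k := by group
    refine (hgK _).mpr ?_
    rw [heq]; exact hk
  refine ⟨adj_smulG hadj g h1, ?_, ?_, ?_⟩
  · intro k hk
    rw [Subgroup.mem_inf, MulAction.mem_stabilizer_iff, MulAction.mem_stabilizer_iff]
    have hu := (Subgroup.mem_inf.mp (h2 (hconj k hk))).1
    have hv := (Subgroup.mem_inf.mp (h2 (hconj k hk))).2
    rw [MulAction.mem_stabilizer_iff] at hu hv
    constructor
    · have : k • g • u = g • ((g⁻¹ * k * g) • u) := by
        rw [smul_smul, smul_smul]; congr 1; group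
      rw [this, hu]
    · have : k • g • v = g • ((g⁻¹ * k * g) • v) := by
        rw [smul_smul, smul_smul]; congr 1; group
      rw [this, hv]
  · intro p hp k hk
    have hset : g • ({u, v} : Set V) = ({g • u, g • v} : Set V) := by
      simp [Set.smul_set_insert, Set.smul_set_singleton]
    have hst : g⁻¹ * p * g ∈ MulAction.stabilizer G ({u, v} : Set V) := by
      rw [MulAction.mem_stabilizer_iff] at hp ⊢
      rw [mul_smul, mul_smul, hset, hp, ← hset, inv_smul_smul]
    have hw := h3 _ hst _ (hconj k hk)
    have heq : g * ((g⁻¹ * p * g) * (g⁻¹ * k * g) * (g⁻¹ * p * g)⁻¹) * g⁻¹ = p * k * p⁻¹ := by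
      group
    exact heq ▸ (hgK _).mp hw
  · intro a ha b hb
    rw [SimpleGraph.mem_neighborSet] at ha hb
    have ha' : g⁻¹ • a ∈ Γ.neighborSet u := by
      rw [SimpleGraph.mem_neighborSet]
      have := adj_smulG hadj g⁻¹ ha
      rwa [inv_smul_smul] at this
    have hb' : g⁻¹ • b ∈ Γ.neighborSet u := by
      rw [SimpleGraph.mem_neighborSet]
      have := adj_smulG hadj g⁻¹ hb
      rwa [inv_smul_smul] at this
    obtain ⟨m, hm, hmab⟩ := h4 _ ha' _ hb'
    rw [Subgroup.mem_inf] at hm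
    refine ⟨g * m * g⁻¹, ?_, ?_⟩
    · rw [Subgroup.mem_inf]
      constructor
      · exact mul_mem (mul_mem hg hm.1) (inv_mem hg)
      · rw [MulAction.mem_stabilizer_iff]
        have hmu := MulAction.mem_stabilizer_iff.mp hm.2
        rw [mul_smul, mul_smul, inv_smul_smul, hmu]
    · rw [mul_smul, mul_smul, hmab, smul_inv_smul]

lemma existsSwapG (hadj : PreservesAdj Γ G) (htrans : MulAction.IsPretransitive G V)
    (hloctrans : ∀ v : V, ∀ u ∈ Γ.neighborSet v, ∀ w ∈ Γ.neighborSet v,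
      ∃ g ∈ MulAction.stabilizer G v, g • u = w)
    {u v : V} (huv : Γ.Adj u v) : ∃ s : G, s • u = v ∧ s • v = u := by
  obtain ⟨t, ht⟩ := htrans.exists_smul_eq u v
  have h1 : t • v ∈ Γ.neighborSet v := by
    rw [SimpleGraph.mem_neighborSet]
    have := adj_smulG hadj t huv
    rwa [ht] at this
  have h2 : u ∈ Γ.neighborSet v := SimpleGraph.mem_neighborSet _ _ _ |>.mpr huv.symm
  obtain ⟨h, hh, hhv⟩ := hloctrans v _ h1 _ h2
  refine ⟨h * t, ?_, ?_⟩
  · rw [mul_smul, ht]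
    exact MulAction.mem_stabilizer_iff.mp hh
  · rw [mul_smul]; exact hhv

lemma goodEdge_symm (hadj : PreservesAdj Γ G) (htrans : MulAction.IsPretransitive G V)
    (hloctrans : ∀ v : V, ∀ u ∈ Γ.neighborSet v, ∀ w ∈ Γ.neighborSet v,
      ∃ g ∈ MulAction.stabilizer G v, g • u = w)
    {u v : V} (h : GoodEdge Γ G K u v) : GoodEdge Γ G K v u := by
  obtain ⟨s, hsu, hsv⟩ := existsSwapG hadj htrans hloctrans h.1
  have hs_stab : s ∈ MulAction.stabilizer G ({u, v} : Set V) := by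
    rw [MulAction.mem_stabilizer_iff]
    rw [show ({u, v} : Set V) = insert u {v} from rfl, Set.smul_set_insert,
      Set.smul_set_singleton, hsu, hsv]
    exact (Set.pair_comm v u)
  have hsN : s ∈ Subgroup.normalizer (K : Set G) := by
    rw [Subgroup.mem_normalizer_iff]
    intro k
    constructor
    · exact fun hk => h.2.2.1 s hs_stab k hk
    · intro hk
      have h' := h.2.2.1 s⁻¹ (inv_mem hs_stab) _ hk
      have heq : s⁻¹ * (s * k * s⁻¹) * s⁻¹⁻¹ = k := by group
      rwa [heq] at h'
  have hres := goodEdge_smul hadj hsN h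
  rwa [hsu, hsv] at hres

lemma goodEdge_step (hadj : PreservesAdj Γ G) {u v w : V}
    (h : GoodEdge Γ G K u v) (hw : Γ.Adj u w) : GoodEdge Γ G K u w := by
  obtain ⟨n, hn, hnv⟩ := h.2.2.2 v (SimpleGraph.mem_neighborSet _ _ _ |>.mpr h.1)
    w (SimpleGraph.mem_neighborSet _ _ _ |>.mpr hw)
  rw [Subgroup.mem_inf] at hn
  have hres := goodEdge_smul hadj hn.1 h
  rwa [MulAction.mem_stabilizer_iff.mp hn.2, hnv] at hres

end Aux
/-- Hauptlemma: if `Γ` is a finite connected graph, `G ≤ Aut(Γ)` is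
vertex-transitive with every vertex-stabiliser transitive on the corresponding
neighbourhood, `{x,y}` is an edge, and `K ≤ G_{xy}` is normal in the edge-stabiliser
`G_e` with `N_{G_x}(K)` transitive on `Γ(x)`, then `K = 1`. -/
theorem stmt_3 {V : Type*} [Fintype V] (Γ : SimpleGraph V) (hconn : Γ.Connected)
    (G : Subgroup (Equiv.Perm V)) (hadj : PreservesAdj Γ G)
    (htrans : MulAction.IsPretransitive G V)
    (hloctrans : ∀ v : V, ∀ u ∈ Γ.neighborSet v, ∀ w ∈ Γ.neighborSet v,
      ∃ g ∈ MulAction.stabilizer G v, g • u = w)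
    (x y : V) (hxy : Γ.Adj x y)
    (K : Subgroup G)
    (hK : K ≤ MulAction.stabilizer G x ⊓ MulAction.stabilizer G y)
    (hKnorm : ∀ g ∈ MulAction.stabilizer G ({x, y} : Set V), ∀ k ∈ K, g * k * g⁻¹ ∈ K)
    (hNtrans : ∀ u ∈ Γ.neighborSet x, ∀ w ∈ Γ.neighborSet x,
      ∃ g ∈ Subgroup.normalizer (K : Set G) ⊓ MulAction.stabilizer G x, g • u = w) :
    K = ⊥ := by
  have key : ∀ (a b : V), Γ.Walk a b → (∃ u, GoodEdge Γ G K a u) →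
      ∃ u, GoodEdge Γ G K b u := by
    intro a b p
    induction p with
    | nil => exact id
    | cons h q ih =>
      rintro ⟨u, hu⟩
      exact ih ⟨_, goodEdge_symm hadj htrans hloctrans (goodEdge_step hadj hu h)⟩
  have hall : ∀ v : V, ∃ u, GoodEdge Γ G K v u := by
    intro v
    obtain ⟨p⟩ := hconn.preconnected x v
    exact key x v p ⟨y, hxy, hK, hKnorm, hNtrans⟩
  rw [Subgroup.eq_bot_iff_forall]
  intro k hk
  have hfix : ∀ v : V, k • v = v := by
    intro v
    obtain ⟨u, hu⟩ := hall v
    exact MulAction.mem_stabilizer_iff.mp (Subgroup.mem_inf.mp (hu.2.1 hk)).1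
  exact Subtype.ext (Equiv.ext fun v => hfix v)
end

section
/- Let p be a prime, let P be a finite p-group, let A ≤ P be an elementary abelian subgroup of maximal order among all elementary abelian subgroups of P, and let Z ≤ P be any elementary abelian subgroup. Then C_Z(A) = Z ∩ A and |Z : C_Z(A)| ≤ |A : C_A(Z)|. -/
/-- A subgroup is elementary abelian for the prime `p` if it is commutative and every
element has order dividing `p`. -/
def IsElemAbelian (p : ℕ) {P : Type*} [Group P] (A : Subgroup P) : Prop :=
  (∀ x ∈ A, ∀ y ∈ A, x * y = y * x) ∧ ∀ x ∈ A, x ^ p = 1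

section Aux
open Pointwise

variable {G : Type*} [Group G]

/-- If two subgroups commute elementwise, membership in their join is a product. -/
lemma mem_sup_of_comm {H K : Subgroup G}
    (hcomm : ∀ h ∈ H, ∀ k ∈ K, h * k = k * h) {x : G} :
    x ∈ H ⊔ K ↔ ∃ h ∈ H, ∃ k ∈ K, h * k = x := by
  constructor
  · intro hx
    let S : Subgroup G :=
      { carrier := (H : Set G) * (K : Set G)
        one_mem' := ⟨1, one_mem _, 1, one_mem _, one_mul 1⟩
        mul_mem' := by
          rintro a b ⟨h1, hh1, k1, hk1, rfl⟩ ⟨h2, hh2, k2, hk2, rfl⟩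
          refine ⟨h1 * h2, mul_mem hh1 hh2, k1 * k2, mul_mem hk1 hk2, ?_⟩
          show h1 * h2 * (k1 * k2) = h1 * k1 * (h2 * k2)
          have hc : k1 * h2 = h2 * k1 := (hcomm h2 hh2 k1 hk1).symm
          rw [show h1 * h2 * (k1 * k2) = h1 * (h2 * k1) * k2 by group, ← hc]
          group
        inv_mem' := by
          rintro a ⟨h, hh, k, hk, rfl⟩
          refine ⟨h⁻¹, inv_mem hh, k⁻¹, inv_mem hk, ?_⟩
          show h⁻¹ * k⁻¹ = (h * k)⁻¹
          rw [hcomm h hh k hk, mul_inv_rev] }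
    have hle : H ⊔ K ≤ S :=
      sup_le (fun h hh => ⟨h, hh, 1, one_mem _, mul_one h⟩)
        (fun k hk => ⟨1, one_mem _, k, hk, one_mul k⟩)
    obtain ⟨h, hh, k, hk, hx'⟩ := Set.mem_mul.1 (hle hx)
    exact ⟨h, hh, k, hk, hx'⟩
  · rintro ⟨h, hh, k, hk, rfl⟩
    exact Subgroup.mul_mem_sup hh hk

lemma isElemAbelian_sup {p : ℕ} {H K : Subgroup G}
    (hcomm : ∀ h ∈ H, ∀ k ∈ K, h * k = k * h)
    (hH : IsElemAbelian p H) (hK : IsElemAbelian p K) :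
    IsElemAbelian p (H ⊔ K) := by
  constructor
  · intro x hx y hy
    rw [mem_sup_of_comm hcomm] at hx hy
    obtain ⟨h1, hh1, k1, hk1, rfl⟩ := hx
    obtain ⟨h2, hh2, k2, hk2, rfl⟩ := hy
    have c1 : h1 * h2 = h2 * h1 := hH.1 h1 hh1 h2 hh2
    have c2 : k1 * k2 = k2 * k1 := hK.1 k1 hk1 k2 hk2
    have c3 : h1 * k2 = k2 * h1 := hcomm h1 hh1 k2 hk2
    have c4 : h2 * k1 = k1 * h2 := hcomm h2 hh2 k1 hk1
    calc h1 * k1 * (h2 * k2) = h1 * (k1 * h2) * k2 := by group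
      _ = h1 * h2 * (k1 * k2) := by rw [← c4]; group
      _ = h2 * h1 * (k2 * k1) := by rw [c1, c2]
      _ = h2 * (h1 * k2) * k1 := by group
      _ = h2 * k2 * (h1 * k1) := by rw [c3]; group
  · intro x hx
    rw [mem_sup_of_comm hcomm] at hx
    obtain ⟨h, hh, k, hk, rfl⟩ := hx
    rw [(Commute.mul_pow (hcomm h hh k hk))]
    rw [hH.2 h hh, hK.2 k hk, one_mul]

lemma subgroup_eq_of_le_of_card_le [Finite G] {H K : Subgroup G} (h : H ≤ K)
    (hc : Nat.card K ≤ Nat.card H) : H = K := by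
  have hs : (H : Set G) ⊆ (K : Set G) := h
  have := Set.eq_of_subset_of_ncard_le hs
    (by rwa [← Nat.card_coe_set_eq, ← Nat.card_coe_set_eq]) (K : Set G).toFinite
  exact SetLike.coe_injective this

/-- Product formula for commuting subgroups (with `K` abelian). -/
lemma card_sup_mul_card_inf_of_comm [Finite G] {H K : Subgroup G}
    (hcomm : ∀ h ∈ H, ∀ k ∈ K, h * k = k * h)
    (hKc : ∀ a ∈ K, ∀ b ∈ K, a * b = b * a) :
    Nat.card ↥(H ⊔ K) * Nat.card ↥(H ⊓ K) = Nat.card H * Nat.card K := by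
  set M : Subgroup G := H ⊔ K with hM
  set H' : Subgroup M := H.subgroupOf M with hH'
  set K' : Subgroup M := K.subgroupOf M with hK'
  have hKnorm : K'.Normal := by
    constructor
    intro n hn g
    have hgn : (g : G) * (n : G) = (n : G) * (g : G) := by
      rw [Subgroup.mem_subgroupOf] at hn
      obtain ⟨h, hh, k, hk, hgk⟩ := (mem_sup_of_comm hcomm).1 g.2
      rw [← hgk, mul_assoc, hKc k hk n hn, ← mul_assoc, hcomm h hh n hn]
      group
    have : g * n * g⁻¹ = n := by
      have : (g * n * g⁻¹ : M) = (n : M) := by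
        ext
        push_cast
        rw [hgn]
        group
      exact this
    rw [this]; exact hn
  have htop : H' ⊔ K' = ⊤ := by
    rw [eq_top_iff]
    rintro ⟨m, hm⟩ -
    obtain ⟨h, hh, k, hk, hgk⟩ := (mem_sup_of_comm hcomm).1 hm
    have hhM : h ∈ M := Subgroup.mem_sup_left hh
    have hkM : k ∈ M := Subgroup.mem_sup_right hk
    have : (⟨m, hm⟩ : M) = ⟨h, hhM⟩ * ⟨k, hkM⟩ := by
      ext; simp [← hgk]
    rw [this]
    exact Subgroup.mul_mem_sup (by rwa [hH', Subgroup.mem_subgroupOf])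
      (by rwa [hK', Subgroup.mem_subgroupOf])
  -- index computations inside M
  have e1 : Nat.card K' * K'.index = Nat.card M := Subgroup.card_mul_index K'
  have e2 : K'.index = K'.relIndex H' := by
    rw [← Subgroup.relIndex_top_right, ← htop, Subgroup.relIndex_sup_right]
  have e3 : Nat.card (K'.subgroupOf H') * K'.relIndex H' = Nat.card H' :=
    Subgroup.card_mul_index (K'.subgroupOf H')
  have c1 : Nat.card H' = Nat.card H :=
    Nat.card_congr (Subgroup.subgroupOfEquivOfLe le_sup_left).toEquiv
  have c2 : Nat.card ↥(K'.subgroupOf H') = Nat.card ↥(H ⊓ K) := by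
    rw [← Subgroup.inf_subgroupOf_right K' H']
    refine Nat.card_congr ?_
    refine (Subgroup.subgroupOfEquivOfLe inf_le_right).toEquiv.trans ?_
    have hinf : K' ⊓ H' = (H ⊓ K).subgroupOf M := by
      rw [hH', hK', Subgroup.subgroupOf, Subgroup.subgroupOf, Subgroup.subgroupOf,
        ← Subgroup.comap_inf, inf_comm]
    rw [hinf]
    exact (Subgroup.subgroupOfEquivOfLe (inf_le_left.trans le_sup_left)).toEquiv
  have cM : Nat.card M = Nat.card ↥(H ⊔ K) := rfl
  have c3 : Nat.card K' = Nat.card K :=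
    Nat.card_congr (Subgroup.subgroupOfEquivOfLe le_sup_right).toEquiv
  calc Nat.card ↥(H ⊔ K) * Nat.card ↥(H ⊓ K)
      = Nat.card M * Nat.card ↥(K'.subgroupOf H') := by rw [cM, c2]
    _ = Nat.card K' * K'.index * Nat.card ↥(K'.subgroupOf H') := by rw [e1]
    _ = Nat.card K' * (Nat.card ↥(K'.subgroupOf H') * K'.relIndex H') := by
        rw [e2]; ring
    _ = Nat.card K * Nat.card H := by rw [e3, c1, c3]
    _ = Nat.card H * Nat.card K := by ring

end Aux

/-- in a finite `p`-group `P`, if `A` is an elementary abelian subgroup of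
maximal order and `Z` is any elementary abelian subgroup, then `C_Z(A) = Z ⊓ A` and
`|Z : C_Z(A)| ≤ |A : C_A(Z)|`. -/
theorem stmt_6 (p : ℕ) (hp : p.Prime) {P : Type*} [Group P] [Fintype P]
    (hP : IsPGroup p P) (A Z : Subgroup P)
    (hA : IsElemAbelian p A) (hZ : IsElemAbelian p Z)
    (hAmax : ∀ B : Subgroup P, IsElemAbelian p B → Nat.card B ≤ Nat.card A) :
    Z ⊓ Subgroup.centralizer (A : Set P) = Z ⊓ A ∧
    (Subgroup.centralizer (A : Set P)).relIndex Z ≤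
      (Subgroup.centralizer (Z : Set P)).relIndex A := by
  classical
  have part1 : Z ⊓ Subgroup.centralizer (A : Set P) = Z ⊓ A := by
    apply le_antisymm
    · rintro z hz
      obtain ⟨hzZ, hzC⟩ := Subgroup.mem_inf.1 hz
      refine Subgroup.mem_inf.2 ⟨hzZ, ?_⟩
      have hcz : ∀ a ∈ A, Commute a z := fun a ha =>
        Subgroup.mem_centralizer_iff.1 hzC a ha
      have hcomm : ∀ a ∈ A, ∀ k ∈ Subgroup.zpowers z, a * k = k * a := by
        rintro a ha k hk
        obtain ⟨n, rfl⟩ := hk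
        exact ((hcz a ha).zpow_right n).eq
      have hzEA : IsElemAbelian p (Subgroup.zpowers z) := by
        constructor
        · rintro x hx y hy
          obtain ⟨m, rfl⟩ := hx
          obtain ⟨n, rfl⟩ := hy
          exact ((Commute.refl z).zpow_zpow m n).eq
        · rintro x hx
          obtain ⟨n, rfl⟩ := hx
          rw [← zpow_natCast (z ^ n) p, ← zpow_mul, mul_comm, zpow_mul, zpow_natCast,
            hZ.2 z hzZ, one_zpow]
      have hEA : IsElemAbelian p (A ⊔ Subgroup.zpowers z) :=
        isElemAbelian_sup hcomm hA hzEA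
      have heq : A = A ⊔ Subgroup.zpowers z :=
        subgroup_eq_of_le_of_card_le le_sup_left (hAmax _ hEA)
      have : z ∈ A ⊔ Subgroup.zpowers z :=
        Subgroup.mem_sup_right (Subgroup.mem_zpowers z)
      rwa [← heq] at this
    · rintro z hz
      obtain ⟨hzZ, hzA⟩ := Subgroup.mem_inf.1 hz
      refine Subgroup.mem_inf.2 ⟨hzZ, Subgroup.mem_centralizer_iff.2 ?_⟩
      exact fun a ha => hA.1 a ha z hzA
  refine ⟨part1, ?_⟩
  set C : Subgroup P := Subgroup.centralizer (Z : Set P) ⊓ A with hC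
  have hcommZC : ∀ h ∈ Z, ∀ k ∈ C, h * k = k * h := fun h hh k hk =>
    Subgroup.mem_centralizer_iff.1 hk.1 h hh
  have hCc : ∀ a ∈ C, ∀ b ∈ C, a * b = b * a := fun a ha b hb =>
    hA.1 a ha.2 b hb.2
  have hCEA : IsElemAbelian p C := ⟨hCc, fun x hx => hA.2 x hx.2⟩
  have hBEA : IsElemAbelian p (Z ⊔ C) := isElemAbelian_sup hcommZC hZ hCEA
  have hprod := card_sup_mul_card_inf_of_comm hcommZC hCc
  have hZC : Z ⊓ C = Z ⊓ A := by
    rw [hC, ← inf_assoc]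
    congr 1
    exact inf_eq_left.2 (fun x hx => Subgroup.mem_centralizer_iff.2
      (fun y hy => hZ.1 y hy x hx))
  -- abbreviations
  set n1 : ℕ := Nat.card ↥(Z ⊓ A) with hn1
  set n2 : ℕ := Nat.card ↥C with hn2
  set c1 : ℕ := (Subgroup.centralizer (A : Set P)).relIndex Z with hc1
  set c2 : ℕ := (Subgroup.centralizer (Z : Set P)).relIndex A with hc2
  have key : Nat.card Z * n2 ≤ Nat.card A * n1 := by
    calc Nat.card Z * n2 = Nat.card ↥(Z ⊔ C) * Nat.card ↥(Z ⊓ C) := hprod.symm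
      _ = Nat.card ↥(Z ⊔ C) * n1 := by rw [hZC]
      _ ≤ Nat.card A * n1 := Nat.mul_le_mul_right n1 (hAmax _ hBEA)
  have e1 : c1 * n1 = Nat.card Z := by
    have h1 : (Subgroup.centralizer (A : Set P)).subgroupOf Z = (Z ⊓ A).subgroupOf Z := by
      rw [← Subgroup.inf_subgroupOf_right, inf_comm, part1]
    have h2 : Nat.card ↥((Z ⊓ A).subgroupOf Z) = n1 :=
      Nat.card_congr (Subgroup.subgroupOfEquivOfLe inf_le_left).toEquiv
    rw [hc1, Subgroup.relIndex, h1, mul_comm, ← h2]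
    exact Subgroup.card_mul_index _
  have e2 : c2 * n2 = Nat.card A := by
    have h1 : (Subgroup.centralizer (Z : Set P)).subgroupOf A = C.subgroupOf A := by
      rw [hC, Subgroup.inf_subgroupOf_right]
    have h2 : Nat.card ↥(C.subgroupOf A) = n2 :=
      Nat.card_congr (Subgroup.subgroupOfEquivOfLe inf_le_right).toEquiv
    rw [hc2, Subgroup.relIndex, h1, mul_comm, ← h2]
    exact Subgroup.card_mul_index _
  have hn1pos : 0 < n1 := Nat.card_pos
  have hn2pos : 0 < n2 := Nat.card_pos
  have : c1 * (n1 * n2) ≤ c2 * (n1 * n2) := by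
    calc c1 * (n1 * n2) = (c1 * n1) * n2 := by ring
      _ = Nat.card Z * n2 := by rw [e1]
      _ ≤ Nat.card A * n1 := key
      _ = (c2 * n2) * n1 := by rw [e2]
      _ = c2 * (n1 * n2) := by ring
  exact Nat.le_of_mul_le_mul_right this (Nat.mul_pos hn1pos hn2pos)
end

section
/- Let n ≥ 4, let L be the permutation group induced by Sym(n) on ordered pairs of distinct elements of {1,…,n}, let (Γ,G) be a locally L pair, let {x,y} be an edge of Γ, and let p be a prime such that G_{xy}^{[1]} is a nontrivial p-group. For each vertex v let Q_v denote the largest normal p-subgroup of G_v^{[1]}, and assume that C_{G_v^{[1]}}(Q_v) ≤ Q_v for every vertex v, and that the largest normal p-subgroup S_{xy} of G_{xy} satisfies C_{G_{xy}}(S_{xy}) ≤ S_{xy}. Let Z_x = Ω_1(Z(Q_x)). Then the permutation groups induced on Γ(x) by C_{G_x}(Q_x) and by C_{G_x}(Z_x) are both intransitive and semiregular (no nontrivial element of the induced group fixes a point of Γ(x)). -/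
open MulAction Pointwise

/-- The subgroup `C ≤ G` induces a transitive permutation group on `Γ(x)`. -/
def TransOnNbrs {V : Type*} (Γ : SimpleGraph V) (G : Subgroup (Equiv.Perm V))
    (C : Subgroup G) (x : V) : Prop :=
  ∀ u ∈ Γ.neighborSet x, ∀ w ∈ Γ.neighborSet x, ∃ g ∈ C, g • u = w

/-- The subgroup `C ≤ G` induces a semiregular permutation group on `Γ(x)`: any element
of `C` fixing some neighbour of `x` induces the identity on `Γ(x)`. -/
def SemiregOnNbrs {V : Type*} (Γ : SimpleGraph V) (G : Subgroup (Equiv.Perm V))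
    (C : Subgroup G) (x : V) : Prop :=
  ∀ g ∈ C, ∀ u ∈ Γ.neighborSet x, g • u = u → ∀ w ∈ Γ.neighborSet x, g • w = w

section GenGroup

variable {Gp : Type*} [Group Gp]

/-- conjugate of a subgroup -/
def cj (g : Gp) (H : Subgroup Gp) : Subgroup Gp := H.map (MulAut.conj g).toMonoidHom

lemma mem_cj {g k : Gp} {H : Subgroup Gp} : k ∈ cj g H ↔ g⁻¹ * k * g ∈ H := by
  constructor
  · rintro ⟨h, hh, rfl⟩
    simpa [MulAut.conj, mul_assoc] using hh
  · intro h
    exact ⟨g⁻¹ * k * g, h, by simp [MulAut.conj, mul_assoc]⟩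

lemma cj_cj (g h : Gp) (H : Subgroup Gp) : cj g (cj h H) = cj (g * h) H := by
  ext k; simp [mem_cj, mul_assoc]

lemma cj_one (H : Subgroup Gp) : cj 1 H = H := by ext k; simp [mem_cj]

lemma cj_inf (g : Gp) (H K : Subgroup Gp) : cj g (H ⊓ K) = cj g H ⊓ cj g K := by
  ext k; simp [mem_cj, Subgroup.mem_inf]

lemma cj_eq_iff {g : Gp} {H K : Subgroup Gp} : cj g H = K ↔ H = cj g⁻¹ K := by
  constructor
  · rintro rfl; rw [cj_cj]; simp [cj_one]
  · rintro rfl; rw [cj_cj]; simp [cj_one]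

lemma cj_of_centralizes {g : Gp} {H : Subgroup Gp} (h : ∀ k ∈ H, g * k * g⁻¹ = k) :
    cj g H = H := by
  ext k
  rw [mem_cj]
  constructor
  · intro hk
    have h2 := h _ hk
    have : g * (g⁻¹ * k * g) * g⁻¹ = k := by group
    rw [h2] at this
    rwa [this] at hk
  · intro hk
    have h2 := h _ hk
    have : g⁻¹ * (g * k * g⁻¹) * g = k := by group
    rw [h2] at this
    rwa [this]

lemma cj_centralizer (g : Gp) (H : Subgroup Gp) :
    cj g (Subgroup.centralizer (H : Set Gp)) =
      Subgroup.centralizer ((cj g H : Subgroup Gp) : Set Gp) := by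
  ext k
  rw [mem_cj, Subgroup.mem_centralizer_iff, Subgroup.mem_centralizer_iff]
  constructor
  · intro h m hm
    rw [SetLike.mem_coe, mem_cj] at hm
    have := h _ hm
    have := congrArg (fun z => g * z * g⁻¹) this
    simpa [mul_assoc] using this
  · intro h m hm
    have hm' : g * m * g⁻¹ ∈ cj g H := by rw [mem_cj]; simpa [mul_assoc] using hm
    have := h _ hm'
    have := congrArg (fun z => g⁻¹ * z * g) this
    simpa [mul_assoc] using this

variable (p : ℕ)

/-- `Ω₁(Z(H))` : elements of order dividing `p` that lie in `H` and centralize `H`. -/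
def omega1 (H : Subgroup Gp) : Subgroup Gp where
  carrier := {g | g ∈ H ∧ g ∈ Subgroup.centralizer (H : Set Gp) ∧ g ^ p = 1}
  one_mem' := ⟨one_mem _, one_mem _, one_pow p⟩
  mul_mem' := by
    rintro a b ⟨haH, haC, hap⟩ ⟨hbH, hbC, hbp⟩
    refine ⟨mul_mem haH hbH, mul_mem haC hbC, ?_⟩
    have hc : Commute a b := by
      have := (Subgroup.mem_centralizer_iff.mp haC) b hbH
      exact (this).symm
    rw [hc.mul_pow, hap, hbp, one_mul]
  inv_mem' := by
    rintro a ⟨haH, haC, hap⟩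
    exact ⟨inv_mem haH, inv_mem haC, by rw [inv_pow, hap, inv_one]⟩

lemma mem_omega1 {H : Subgroup Gp} {g : Gp} :
    g ∈ omega1 p H ↔ g ∈ H ∧ g ∈ Subgroup.centralizer (H : Set Gp) ∧ g ^ p = 1 :=
  Iff.rfl

lemma omega1_le (H : Subgroup Gp) : omega1 p H ≤ H := fun _ h => h.1

lemma omega1_le_centralizer (H : Subgroup Gp) :
    omega1 p H ≤ Subgroup.centralizer (H : Set Gp) := fun _ h => h.2.1

lemma conj_pow_eq_one_iff (g k : Gp) (m : ℕ) : (g⁻¹ * k * g) ^ m = 1 ↔ k ^ m = 1 := by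
  have h1 : g⁻¹ * k * g = g⁻¹ * k * g⁻¹⁻¹ := by simp
  rw [h1, conj_pow]
  constructor
  · intro h
    have h2 : g * (g⁻¹ * k ^ m * g⁻¹⁻¹) * g⁻¹ = k ^ m := by group
    rw [h] at h2; simpa using h2.symm
  · intro h; rw [h]; group

lemma cj_omega1 (g : Gp) (H : Subgroup Gp) : cj g (omega1 p H) = omega1 p (cj g H) := by
  have hC := cj_centralizer g H
  ext k
  have hcent : k ∈ Subgroup.centralizer ((cj g H : Subgroup Gp) : Set Gp) ↔
      g⁻¹ * k * g ∈ Subgroup.centralizer (H : Set Gp) := by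
    rw [← hC, mem_cj]
  rw [mem_cj, mem_omega1, mem_omega1, ← mem_cj (g := g) (H := H), hcent,
    conj_pow_eq_one_iff, mem_cj]

end GenGroup

section PermStuff
open Equiv Equiv.Perm
variable {n : ℕ}

lemma opairs_smul_fst (σ : Perm (Fin n)) (P : OPairs n) : (σ • P).1.1 = σ P.1.1 := rfl
lemma opairs_smul_snd (σ : Perm (Fin n)) (P : OPairs n) : (σ • P).1.2 = σ P.1.2 := rfl

lemma opairs_smul_eq_iff {σ : Perm (Fin n)} {P R : OPairs n} :
    σ • P = R ↔ σ P.1.1 = R.1.1 ∧ σ P.1.2 = R.1.2 := by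
  constructor
  · intro h; rw [← h]; exact ⟨rfl, rfl⟩
  · rintro ⟨h1, h2⟩
    apply Subtype.ext
    apply Prod.ext <;> simpa

lemma exists_ne2 (hn : 4 ≤ n) (a b : Fin n) : ∃ c, c ≠ a ∧ c ≠ b := by
  by_contra h
  push_neg at h
  have hsub : (Finset.univ : Finset (Fin n)) ⊆ {a, b} := by
    intro c _
    rcases eq_or_ne c a with rfl | h1
    · simp
    · simp [h c h1]
  have h1 := Finset.card_le_card hsub
  have h2 : ({a, b} : Finset (Fin n)).card ≤ 2 :=
    (Finset.card_insert_le _ _).trans (by simp)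
  simp only [Finset.card_univ, Fintype.card_fin] at h1
  omega

lemma exists_ne3 (hn : 4 ≤ n) (a b c : Fin n) : ∃ d, d ≠ a ∧ d ≠ b ∧ d ≠ c := by
  by_contra h
  push_neg at h
  have hsub : (Finset.univ : Finset (Fin n)) ⊆ {a, b, c} := by
    intro d _
    rcases eq_or_ne d a with rfl | h1
    · simp
    rcases eq_or_ne d b with rfl | h2
    · simp
    simp [h d h1 h2]
  have h1 := Finset.card_le_card hsub
  have h2 : ({a, b, c} : Finset (Fin n)).card ≤ 3 :=
    (Finset.card_insert_le _ _).trans (by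
      have := Finset.card_insert_le b ({c} : Finset (Fin n))
      simp at this ⊢
      omega)
  simp only [Finset.card_univ, Fintype.card_fin] at h1
  omega

lemma pair_map (P R : OPairs n) : ∃ σ : Perm (Fin n), σ • P = R := by
  obtain ⟨⟨s, t⟩, hst⟩ := P
  obtain ⟨⟨u, v⟩, huv⟩ := R
  simp only [ne_eq] at hst huv
  set t' := Equiv.swap s u t with ht'
  have ht'u : t' ≠ u := by
    rw [ht']
    intro h
    exact hst (by simpa using ((Equiv.swap s u).injective (h.trans (Equiv.swap_apply_left s u).symm)).symm)
  refine ⟨Equiv.swap t' v * Equiv.swap s u, opairs_smul_eq_iff.mpr ⟨?_, ?_⟩⟩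
  · show Equiv.swap t' v (Equiv.swap s u s) = u
    rw [Equiv.swap_apply_left, Equiv.swap_apply_of_ne_of_ne (Ne.symm ht'u) huv]
  · show Equiv.swap t' v (Equiv.swap s u t) = v
    rw [← ht', Equiv.swap_apply_left]

lemma pair_map_even (hn : 4 ≤ n) (P R : OPairs n) :
    ∃ σ : Perm (Fin n), σ • P = R ∧ σ ∈ alternatingGroup (Fin n) := by
  obtain ⟨σ, hσ⟩ := pair_map P R
  obtain ⟨e, heu, hev⟩ := exists_ne2 hn R.1.1 R.1.2
  obtain ⟨f, hfe, hfu, hfv⟩ := exists_ne3 hn e R.1.1 R.1.2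
  have hswapR : Equiv.swap e f • R = R := by
    apply opairs_smul_eq_iff.mpr
    constructor
    · exact Equiv.swap_apply_of_ne_of_ne (Ne.symm heu) (Ne.symm hfu)
    · exact Equiv.swap_apply_of_ne_of_ne (Ne.symm hev) (Ne.symm hfv)
  rcases Int.units_eq_one_or (Equiv.Perm.sign σ) with hs | hs
  · exact ⟨σ, hσ, mem_alternatingGroup.mpr hs⟩
  · refine ⟨Equiv.swap e f * σ, ?_, ?_⟩
    · rw [mul_smul, hσ, hswapR]
    · rw [mem_alternatingGroup, Equiv.Perm.sign_mul, hs,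
        Equiv.Perm.sign_swap (Ne.symm hfe)]
      simp

lemma jordanN (hn : 4 ≤ n) (N : Subgroup (Perm (Fin n))) (hN : N.Normal) {σ : Perm (Fin n)}
    (hσN : σ ∈ N) (hσ1 : σ ≠ 1) {a b : Fin n} (hab : a ≠ b) (ha : σ a = a) (hb : σ b = b)
    (P R : OPairs n) : ∃ ρ ∈ N, ρ • P = R := by
  have hc : ∃ c, σ c ≠ c := by
    by_contra h
    push_neg at h
    exact hσ1 (Equiv.ext fun z => by simpa using h z)
  obtain ⟨c, hc⟩ := hc
  set d := σ c with hd
  have hca : c ≠ a := fun h => hc (by rw [hd, h, ha])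
  have hcb : c ≠ b := fun h => hc (by rw [hd, h, hb])
  have hda : d ≠ a := fun h => hca (σ.injective (show σ c = σ a by rw [← hd, h, ha]))
  have hdc : d ≠ c := hc
  have hmem : σ * Equiv.swap a c * σ⁻¹ * (Equiv.swap a c)⁻¹ ∈ N := by
    have h1 : Equiv.swap a c * σ⁻¹ * (Equiv.swap a c)⁻¹ ∈ N :=
      hN.conj_mem _ (inv_mem hσN) _
    have h2 := mul_mem hσN h1
    rwa [show σ * (Equiv.swap a c * σ⁻¹ * (Equiv.swap a c)⁻¹) =
      σ * Equiv.swap a c * σ⁻¹ * (Equiv.swap a c)⁻¹ by group] at h2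
  have hform : σ * Equiv.swap a c * σ⁻¹ * (Equiv.swap a c)⁻¹ =
      Equiv.swap a d * Equiv.swap a c := by
    rw [← Equiv.swap_apply_apply σ a c, ha, ← hd, Equiv.swap_inv]
  rw [hform] at hmem
  have h3 : (Equiv.swap a d * Equiv.swap a c).IsThreeCycle :=
    isThreeCycle_swap_mul_swap_same (Ne.symm hda) (Ne.symm hca) hdc
  have hall : ∀ τ : Perm (Fin n), τ.IsThreeCycle → τ ∈ N := by
    intro τ hτ
    have hconj : IsConj (Equiv.swap a d * Equiv.swap a c) τ :=
      Equiv.Perm.isConj_iff_cycleType_eq.mpr (by rw [h3.cycleType, hτ.cycleType])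
    obtain ⟨u0, hu0⟩ := isConj_iff.mp hconj
    rw [← hu0]
    exact hN.conj_mem _ hmem u0
  have halt : alternatingGroup (Fin n) ≤ N := by
    rw [← Equiv.Perm.closure_three_cycles_eq_alternating]
    exact (Subgroup.closure_le N).mpr fun τ hτ => hall τ hτ
  obtain ⟨ρ, hρP, hρalt⟩ := pair_map_even hn P R
  exact ⟨ρ, halt hρalt, hρP⟩

end PermStuff

section GraphInfra

variable {V : Type*} {Γ : SimpleGraph V} {G : Subgroup (Equiv.Perm V)}

lemma smul_apply_eq (g : ↥G) (v : V) : g • v = (g : Equiv.Perm V) v := rfl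

lemma smul_adj (hP : PreservesAdj Γ G) (g : ↥G) {u v : V} (h : Γ.Adj u v) :
    Γ.Adj (g • u) (g • v) := (hP g.1 g.2 u v).mp h

lemma smul_adj_iff (hP : PreservesAdj Γ G) (g : ↥G) (u v : V) :
    Γ.Adj u v ↔ Γ.Adj (g • u) (g • v) := hP g.1 g.2 u v

lemma dist_le_one_iff (hconn : Γ.Connected) {v w : V} :
    Γ.dist v w ≤ 1 ↔ w = v ∨ Γ.Adj v w := by
  constructor
  · intro h
    interval_cases hd : Γ.dist v w
    · left; exact (hconn.dist_eq_zero_iff.mp hd).symm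
    · right; exact (SimpleGraph.dist_eq_one_iff_adj).mp hd
  · rintro (rfl | hadj)
    · simp [SimpleGraph.dist_self]
    · rw [SimpleGraph.dist_eq_one_iff_adj.mpr hadj]

lemma mem_ballStab1 (hconn : Γ.Connected) {g : ↥G} {v : V} :
    g ∈ ballStab Γ G v 1 ↔ g • v = v ∧ ∀ w, Γ.Adj v w → g • w = w := by
  rw [ballStab]
  simp only [Subgroup.mem_iInf, MulAction.mem_stabilizer_iff]
  constructor
  · intro h
    exact ⟨h v (by simp [SimpleGraph.dist_self]),
      fun w hw => h w (by rw [SimpleGraph.dist_eq_one_iff_adj.mpr hw])⟩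
  · rintro ⟨h1, h2⟩ w hw
    rcases (dist_le_one_iff hconn).mp hw with rfl | hadj
    · exact h1
    · exact h2 w hadj

lemma ballStab_le_stab (hconn : Γ.Connected) (v : V) :
    ballStab Γ G v 1 ≤ MulAction.stabilizer G v :=
  fun g hg => ((mem_ballStab1 hconn).mp hg).1

lemma ballStab_le_stab_adj (hconn : Γ.Connected) {v w : V} (h : Γ.Adj v w) :
    ballStab Γ G v 1 ≤ MulAction.stabilizer G w :=
  fun g hg => ((mem_ballStab1 hconn).mp hg).2 w h

lemma cj_stab (g : ↥G) (v : V) :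
    cj g (MulAction.stabilizer G v) = MulAction.stabilizer G (g • v) :=
  (MulAction.stabilizer_smul_eq_stabilizer_map_conj g v).symm

lemma cj_ballStab (hconn : Γ.Connected) (hP : PreservesAdj Γ G) (g : ↥G) (v : V) :
    cj g (ballStab Γ G v 1) = ballStab Γ G (g • v) 1 := by
  ext k
  rw [mem_cj, mem_ballStab1 hconn, mem_ballStab1 hconn]
  constructor
  · rintro ⟨h1, h2⟩
    constructor
    · have := congrArg (fun z => g • z) h1
      simpa [smul_smul, mul_assoc] using this
    · intro w hw
      have hw' : Γ.Adj v (g⁻¹ • w) := by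
        have := smul_adj hP g⁻¹ hw
        simpa using this
      have := congrArg (fun z => g • z) (h2 _ hw')
      simpa [smul_smul, mul_assoc] using this
  · rintro ⟨h1, h2⟩
    constructor
    · have := congrArg (fun z => g⁻¹ • z) h1
      simpa [smul_smul, mul_assoc] using this
    · intro w hw
      have hw' : Γ.Adj (g • v) (g • w) := smul_adj hP g hw
      have := congrArg (fun z => g⁻¹ • z) (h2 _ hw')
      simpa [smul_smul, mul_assoc] using this

end GraphInfra

section MoreInfra

variable {V : Type*} {n : ℕ} {Γ : SimpleGraph V} {G : Subgroup (Equiv.Perm V)}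

lemma local_trans (hloc : IsLocallyOPairs n Γ G) (x : V) :
    ∀ u ∈ Γ.neighborSet x, ∀ w ∈ Γ.neighborSet x,
      ∃ g ∈ MulAction.stabilizer G x, g • u = w := by
  intro u hu w hw
  obtain ⟨e, φ, hsurj, hcompat⟩ := hloc.2.2 x
  obtain ⟨σ, hσ⟩ := pair_map (e ⟨u, hu⟩) (e ⟨w, hw⟩)
  obtain ⟨g, hg⟩ := hsurj σ
  refine ⟨g.1, g.2, ?_⟩
  have := hcompat g ⟨u, hu⟩
  rw [hg, hσ] at this
  simp only [Equiv.symm_apply_apply] at this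
  exact this.symm

lemma semireg_core (hn : 4 ≤ n) (hloc : IsLocallyOPairs n Γ G) (x : V)
    (C : Subgroup G) (hCle : C ≤ MulAction.stabilizer G x)
    (hCnorm : ∀ g ∈ MulAction.stabilizer G x, cj g C = C)
    (hNT : ¬ TransOnNbrs Γ G C x) : SemiregOnNbrs Γ G C x := by
  intro g hgC u hu hfix w hw
  by_contra hmove
  apply hNT
  obtain ⟨e, φ, hsurj, hcompat⟩ := hloc.2.2 x
  have hC'norm : (C.subgroupOf (MulAction.stabilizer G x)).Normal := by
    constructor
    intro c hc t
    rw [Subgroup.mem_subgroupOf] at hc ⊢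
    have h1 : cj (t : ↥G) C = C := hCnorm t.1 t.2
    rw [← h1, mem_cj]
    have h2 : (t : ↥G)⁻¹ * ((t : ↥G) * c * (t : ↥G)⁻¹) * t = c := by group
    rw [show ((t * c * t⁻¹ : MulAction.stabilizer G x) : ↥G)
      = (t : ↥G) * c * (t : ↥G)⁻¹ by rfl]
    rwa [h2]
  have hNnorm : ((C.subgroupOf (MulAction.stabilizer G x)).map φ).Normal :=
    hC'norm.map φ hsurj
  have hgSt : g ∈ MulAction.stabilizer G x := hCle hgC
  have hσN : φ ⟨g, hgSt⟩ ∈ (C.subgroupOf (MulAction.stabilizer G x)).map φ :=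
    ⟨⟨g, hgSt⟩, Subgroup.mem_subgroupOf.mpr hgC, rfl⟩
  have hnbr : ∀ (t : MulAction.stabilizer G x) (v : Γ.neighborSet x),
      (t : ↥G) • (v : V) ∈ Γ.neighborSet x := by
    intro t v
    have h3 := smul_adj hloc.1 (t : ↥G) v.2
    have hx : (t : ↥G) • x = x := t.2
    rwa [hx] at h3
  have hcompat' : ∀ (t : MulAction.stabilizer G x) (v : Γ.neighborSet x),
      e.symm (φ t • e v) = ⟨(t : ↥G) • (v : V), hnbr t v⟩ := by
    intro t v
    have h4 := hcompat t v
    exact Subtype.ext h4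
  have hfixP : φ ⟨g, hgSt⟩ • e ⟨u, hu⟩ = e ⟨u, hu⟩ := by
    have h5 := hcompat' ⟨g, hgSt⟩ ⟨u, hu⟩
    have h2 : (⟨g • u, hnbr ⟨g, hgSt⟩ ⟨u, hu⟩⟩ :
        Γ.neighborSet x) = ⟨u, hu⟩ := by
      apply Subtype.coe_injective
      simpa using hfix
    rw [h2] at h5
    calc φ ⟨g, hgSt⟩ • e ⟨u, hu⟩
        = e (e.symm (φ ⟨g, hgSt⟩ • e ⟨u, hu⟩)) := (e.apply_symm_apply _).symm
      _ = e ⟨u, hu⟩ := by rw [h5]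
  have hσ1 : φ ⟨g, hgSt⟩ ≠ 1 := by
    intro h1
    apply hmove
    have h6 := hcompat' ⟨g, hgSt⟩ ⟨w, hw⟩
    rw [h1] at h6
    simp only [one_smul, Equiv.symm_apply_apply] at h6
    have h7 := congrArg Subtype.val h6
    simpa using h7.symm
  obtain ⟨ha, hb⟩ := opairs_smul_eq_iff.mp hfixP
  intro u' hu' w' hw'
  obtain ⟨ρ, hρN, hρmap⟩ := jordanN hn _ hNnorm hσN hσ1 (e ⟨u, hu⟩).2 ha hb
      (e ⟨u', hu'⟩) (e ⟨w', hw'⟩)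
  obtain ⟨c', hc'C, hc'map⟩ := hρN
  refine ⟨(c' : ↥G), Subgroup.mem_subgroupOf.mp hc'C, ?_⟩
  have h8 := hcompat' c' ⟨u', hu'⟩
  rw [hc'map, hρmap] at h8
  simp only [Equiv.symm_apply_apply] at h8
  have h9 := congrArg Subtype.val h8
  simpa using h9.symm

lemma global_triv (hconn : Γ.Connected) (hloc : IsLocallyOPairs n Γ G)
    {x y : V} (hxy : Γ.Adj x y) (A : Subgroup G)
    (hAx : A ≤ MulAction.stabilizer G x) (hAy : A ≤ MulAction.stabilizer G y)
    (hNx : ∀ g ∈ MulAction.stabilizer G x, cj g A = A)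
    (hNy : ∀ g ∈ MulAction.stabilizer G y, cj g A = A) : A = ⊥ := by
  set HH := (MulAction.stabilizer G x) ⊔ (MulAction.stabilizer G y) with hHH
  have hHHnorm : ∀ h ∈ HH, cj h A = A := by
    have hx' : MulAction.stabilizer G x ≤ Subgroup.normalizer (A : Set ↥G) := by
      intro g hg
      rw [Subgroup.mem_normalizer_iff]
      intro a
      constructor
      · intro ha
        rw [← hNx g hg, mem_cj]
        have : g⁻¹ * (g * a * g⁻¹) * g = a := by group
        rwa [this]
      · intro ha
        rw [← hNx g hg, mem_cj] at ha
        have : g⁻¹ * (g * a * g⁻¹) * g = a := by group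
        rwa [this] at ha
    have hy' : MulAction.stabilizer G y ≤ Subgroup.normalizer (A : Set ↥G) := by
      intro g hg
      rw [Subgroup.mem_normalizer_iff]
      intro a
      constructor
      · intro ha
        rw [← hNy g hg, mem_cj]
        have : g⁻¹ * (g * a * g⁻¹) * g = a := by group
        rwa [this]
      · intro ha
        rw [← hNy g hg, mem_cj] at ha
        have : g⁻¹ * (g * a * g⁻¹) * g = a := by group
        rwa [this] at ha
    intro h hh
    have hmem : h ∈ Subgroup.normalizer (A : Set ↥G) := (sup_le hx' hy') hh
    ext a
    rw [mem_cj]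
    have h10 := Subgroup.mem_normalizer_iff.mp (inv_mem hmem) a
    simp only [inv_inv] at h10
    exact h10.symm
  -- reachability
  set U : Set V := {v | ∃ h ∈ HH, h • x = v ∨ h • y = v} with hU
  have hxU : x ∈ U := ⟨1, one_mem _, Or.inl (one_smul _ _)⟩
  have hstep : ∀ u v : V, Γ.Adj u v → u ∈ U → v ∈ U := by
    rintro u v hadj ⟨h, hh, hcase⟩
    rcases hcase with hhx | hhy
    · -- u = h • x ; h⁻¹ • v adjacent to x
      have hadj' : Γ.Adj x (h⁻¹ • v) := by
        have := smul_adj hloc.1 h⁻¹ hadj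
        rw [← hhx] at this
        simpa using this
      have h2 : Γ.Adj x y := hxy
      obtain ⟨s, hs, hsmap⟩ := local_trans hloc x y h2 (h⁻¹ • v) hadj'
      refine ⟨h * s, mul_mem hh (le_sup_left (α := Subgroup ↥G) hs), Or.inr ?_⟩
      rw [mul_smul, hsmap]
      simp
    · have hadj' : Γ.Adj y (h⁻¹ • v) := by
        have := smul_adj hloc.1 h⁻¹ hadj
        rw [← hhy] at this
        simpa using this
      obtain ⟨s, hs, hsmap⟩ := local_trans hloc y x hxy.symm (h⁻¹ • v) hadj'
      refine ⟨h * s, mul_mem hh (le_sup_right (α := Subgroup ↥G) hs), Or.inl ?_⟩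
      rw [mul_smul, hsmap]
      simp
  have hwalk : ∀ (u v : V) (w : Γ.Walk u v), u ∈ U → v ∈ U := by
    intro u v w
    induction w with
    | nil => exact fun h => h
    | cons hadj _ ih => exact fun hu => ih (hstep _ _ hadj hu)
  have hallU : ∀ v : V, v ∈ U := fun v =>
    hwalk x v (hconn.preconnected x v).some hxU
  rw [eq_bot_iff]
  intro a ha
  rw [Subgroup.mem_bot]
  have htriv : ∀ v : V, a • v = v := by
    intro v
    obtain ⟨h, hh, hc⟩ := hallU v
    have hconj : h⁻¹ * a * h ∈ A := by
      rw [← mem_cj]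
      rw [hHHnorm h hh]
      exact ha
    rcases hc with hhx | hhy
    · calc a • v = (a * h) • x := by rw [← hhx, smul_smul]
      _ = (h * (h⁻¹ * a * h)) • x := by congr 1; group
      _ = h • ((h⁻¹ * a * h) • x) := by rw [smul_smul]
      _ = h • x := by rw [hAx hconj]
      _ = v := hhx
    · calc a • v = (a * h) • y := by rw [← hhy, smul_smul]
      _ = (h * (h⁻¹ * a * h)) • y := by congr 1; group
      _ = h • ((h⁻¹ * a * h) • y) := by rw [smul_smul]
      _ = h • y := by rw [hAy hconj]
      _ = v := hhy
  apply Subtype.ext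
  apply Equiv.ext
  intro v
  exact htriv v

end MoreInfra

section Main

variable {V : Type*} {n : ℕ} {Γ : SimpleGraph V} {G : Subgroup (Equiv.Perm V)} {p : ℕ}

lemma cj_Q_le (hconn : Γ.Connected) (hP : PreservesAdj Γ G)
    (Q : V → Subgroup G)
    (hQle : ∀ v, Q v ≤ ballStab Γ G v 1)
    (hQp : ∀ v, IsPGroup p (Q v))
    (hQnorm : ∀ v, ∀ g ∈ ballStab Γ G v 1, ∀ k ∈ Q v, g * k * g⁻¹ ∈ Q v)
    (hQmax : ∀ v, ∀ R : Subgroup G, R ≤ ballStab Γ G v 1 → IsPGroup p R →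
      (∀ g ∈ ballStab Γ G v 1, ∀ k ∈ R, g * k * g⁻¹ ∈ R) → R ≤ Q v)
    (g : ↥G) (v : V) : cj g (Q v) ≤ Q (g • v) := by
  apply hQmax (g • v)
  · intro k hk
    rw [mem_cj] at hk
    rw [← cj_ballStab hconn hP g v, mem_cj]
    exact hQle v hk
  · exact (hQp v).map _
  · intro k' hk' a ha
    rw [mem_cj] at ha ⊢
    rw [← cj_ballStab hconn hP g v, mem_cj] at hk'
    have h1 : g⁻¹ * (k' * a * k'⁻¹) * g =
        (g⁻¹ * k' * g) * (g⁻¹ * a * g) * (g⁻¹ * k' * g)⁻¹ := by group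
    rw [h1]
    exact hQnorm v _ hk' _ ha

lemma cj_Q (hconn : Γ.Connected) (hP : PreservesAdj Γ G)
    (Q : V → Subgroup G)
    (hQle : ∀ v, Q v ≤ ballStab Γ G v 1)
    (hQp : ∀ v, IsPGroup p (Q v))
    (hQnorm : ∀ v, ∀ g ∈ ballStab Γ G v 1, ∀ k ∈ Q v, g * k * g⁻¹ ∈ Q v)
    (hQmax : ∀ v, ∀ R : Subgroup G, R ≤ ballStab Γ G v 1 → IsPGroup p R →
      (∀ g ∈ ballStab Γ G v 1, ∀ k ∈ R, g * k * g⁻¹ ∈ R) → R ≤ Q v)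
    (g : ↥G) (v : V) : cj g (Q v) = Q (g • v) := by
  apply le_antisymm (cj_Q_le hconn hP Q hQle hQp hQnorm hQmax g v)
  have h2 := cj_Q_le hconn hP Q hQle hQp hQnorm hQmax g⁻¹ (g • v)
  rw [inv_smul_smul] at h2
  intro k hk
  rw [mem_cj]
  apply h2
  rw [mem_cj]
  have h3 : g⁻¹⁻¹ * (g⁻¹ * k * g) * g⁻¹ = k := by group
  rwa [h3]

lemma cj_centralizer_Q (hconn : Γ.Connected) (hP : PreservesAdj Γ G)
    (Q : V → Subgroup G)
    (hQle : ∀ v, Q v ≤ ballStab Γ G v 1)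
    (hQp : ∀ v, IsPGroup p (Q v))
    (hQnorm : ∀ v, ∀ g ∈ ballStab Γ G v 1, ∀ k ∈ Q v, g * k * g⁻¹ ∈ Q v)
    (hQmax : ∀ v, ∀ R : Subgroup G, R ≤ ballStab Γ G v 1 → IsPGroup p R →
      (∀ g ∈ ballStab Γ G v 1, ∀ k ∈ R, g * k * g⁻¹ ∈ R) → R ≤ Q v)
    (g : ↥G) (v : V) :
    cj g (Subgroup.centralizer ((Q v : Subgroup ↥G) : Set ↥G)) =
      Subgroup.centralizer ((Q (g • v) : Subgroup ↥G) : Set ↥G) := by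
  rw [cj_centralizer, cj_Q hconn hP Q hQle hQp hQnorm hQmax]

/-- The edge kernel `K = G^{[1]}_{xy}` is contained in `Q x`. -/
lemma K_le_Qx (hconn : Γ.Connected) (hP : PreservesAdj Γ G)
    {x y : V} (hxy : Γ.Adj x y)
    (hpgrp : IsPGroup p ↥(ballStab Γ G x 1 ⊓ ballStab Γ G y 1))
    (Q : V → Subgroup G)
    (hQmax : ∀ v, ∀ R : Subgroup G, R ≤ ballStab Γ G v 1 → IsPGroup p R →
      (∀ g ∈ ballStab Γ G v 1, ∀ k ∈ R, g * k * g⁻¹ ∈ R) → R ≤ Q v) :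
    ballStab Γ G x 1 ⊓ ballStab Γ G y 1 ≤ Q x := by
  apply hQmax x
  · exact inf_le_left
  · exact hpgrp
  · intro g hg k hk
    have hgx : g • x = x := ballStab_le_stab hconn x hg
    have hgy : g • y = y := ballStab_le_stab_adj hconn hxy hg
    have h1 : cj g (ballStab Γ G x 1 ⊓ ballStab Γ G y 1)
        = ballStab Γ G x 1 ⊓ ballStab Γ G y 1 := by
      rw [cj_inf, cj_ballStab hconn hP, cj_ballStab hconn hP, hgx, hgy]
    rw [← h1, mem_cj]
    have h2 : g⁻¹ * (g * k * g⁻¹) * g = k := by group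
    rwa [h2]

/-- `Q x ≤ S_{xy}`. -/
lemma Q_le_S (hconn : Γ.Connected) (hP : PreservesAdj Γ G)
    {x y : V} (hxy : Γ.Adj x y)
    (Q : V → Subgroup G)
    (hQle : ∀ v, Q v ≤ ballStab Γ G v 1)
    (hQp : ∀ v, IsPGroup p (Q v))
    (hQnorm : ∀ v, ∀ g ∈ ballStab Γ G v 1, ∀ k ∈ Q v, g * k * g⁻¹ ∈ Q v)
    (hQmax : ∀ v, ∀ R : Subgroup G, R ≤ ballStab Γ G v 1 → IsPGroup p R →
      (∀ g ∈ ballStab Γ G v 1, ∀ k ∈ R, g * k * g⁻¹ ∈ R) → R ≤ Q v)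
    (Sxy : Subgroup G)
    (hSmax : ∀ R : Subgroup G, R ≤ MulAction.stabilizer G x ⊓ MulAction.stabilizer G y →
      IsPGroup p R →
      (∀ g ∈ MulAction.stabilizer G x ⊓ MulAction.stabilizer G y, ∀ k ∈ R, g * k * g⁻¹ ∈ R) →
      R ≤ Sxy) :
    Q x ≤ Sxy := by
  apply hSmax
  · exact le_inf ((hQle x).trans (ballStab_le_stab hconn x))
      ((hQle x).trans (ballStab_le_stab_adj hconn hxy))
  · exact hQp x
  · intro g hg k hk
    have hgx : g • x = x := hg.1
    have h1 : cj g (Q x) = Q x := by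
      rw [cj_Q hconn hP Q hQle hQp hQnorm hQmax, hgx]
    rw [← h1, mem_cj]
    have h2 : g⁻¹ * (g * k * g⁻¹) * g = k := by group
    rwa [h2]

end Main

section Main2

variable {V : Type*} {n : ℕ} {Γ : SimpleGraph V} {G : Subgroup (Equiv.Perm V)} {p : ℕ}

lemma nbr_smul (hP : PreservesAdj Γ G) {x u : V} (h : ↥G)
    (hu : u ∈ Γ.neighborSet x) : h • u ∈ Γ.neighborSet (h • x) := by
  rw [SimpleGraph.mem_neighborSet] at hu ⊢
  exact smul_adj hP h hu

lemma nbr_smul_inv (hP : PreservesAdj Γ G) {x v u : V} (h : ↥G) (hh : h • x = v)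
    (hu : u ∈ Γ.neighborSet v) : h⁻¹ • u ∈ Γ.neighborSet x := by
  have h2 := nbr_smul hP h⁻¹ hu
  rwa [← hh, inv_smul_smul] at h2

lemma trans_transport (hP : PreservesAdj Γ G) {C : Subgroup G} {x v : V} (h : ↥G)
    (hh : h • x = v) (hT : TransOnNbrs Γ G C x) : TransOnNbrs Γ G (cj h C) v := by
  intro u hu w hw
  obtain ⟨c, hc, hcm⟩ := hT _ (nbr_smul_inv hP h hh hu) _ (nbr_smul_inv hP h hh hw)
  refine ⟨h * c * h⁻¹, ?_, ?_⟩
  · rw [mem_cj]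
    have h3 : h⁻¹ * (h * c * h⁻¹) * h = c := by group
    rwa [h3]
  · calc (h * c * h⁻¹) • u = h • (c • (h⁻¹ • u)) := by rw [mul_smul, mul_smul]
    _ = h • (h⁻¹ • w) := by rw [hcm]
    _ = w := by simp

lemma centralizer_fix {H : Subgroup G} {c : ↥G}
    (hc : c ∈ Subgroup.centralizer (H : Set ↥G)) {k : ↥G} (hk : k ∈ H) :
    c * k * c⁻¹ = k := by
  have h1 := Subgroup.mem_centralizer_iff.mp hc k hk
  rw [← h1]
  group

lemma cj_of_le_centralizer {H K : Subgroup G} {c : ↥G}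
    (hc : c ∈ Subgroup.centralizer (H : Set ↥G)) (hKH : K ≤ H) : cj c K = K :=
  cj_of_centralizes fun k hk => centralizer_fix hc (hKH hk)

lemma part1trans (hn : 4 ≤ n) (hconn : Γ.Connected) (hloc : IsLocallyOPairs n Γ G)
    {x y : V} (hxy : Γ.Adj x y)
    (hne : ballStab Γ G x 1 ⊓ ballStab Γ G y 1 ≠ ⊥)
    (hpgrp : IsPGroup p ↥(ballStab Γ G x 1 ⊓ ballStab Γ G y 1))
    (Q : V → Subgroup G)
    (hQle : ∀ v, Q v ≤ ballStab Γ G v 1)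
    (hQp : ∀ v, IsPGroup p (Q v))
    (hQnorm : ∀ v, ∀ g ∈ ballStab Γ G v 1, ∀ k ∈ Q v, g * k * g⁻¹ ∈ Q v)
    (hQmax : ∀ v, ∀ R : Subgroup G, R ≤ ballStab Γ G v 1 → IsPGroup p R →
      (∀ g ∈ ballStab Γ G v 1, ∀ k ∈ R, g * k * g⁻¹ ∈ R) → R ≤ Q v) :
    ¬ TransOnNbrs Γ G
      (MulAction.stabilizer G x ⊓ Subgroup.centralizer ((Q x : Subgroup ↥G) : Set ↥G)) x := by
  intro hT
  have hP := hloc.1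
  set K := ballStab Γ G x 1 ⊓ ballStab Γ G y 1 with hK
  have hpgrp' : IsPGroup p ↥(ballStab Γ G y 1 ⊓ ballStab Γ G x 1) := by
    rwa [inf_comm]
  have hKQx : K ≤ Q x := K_le_Qx hconn hP hxy hpgrp Q hQmax
  have hKQy : K ≤ Q y := by
    have h2 := K_le_Qx hconn hP hxy.symm hpgrp' Q hQmax
    intro k hk
    exact h2 (by rwa [inf_comm])
  have hKsx : K ≤ MulAction.stabilizer G x := inf_le_left.trans (ballStab_le_stab hconn x)
  have hKsy : K ≤ MulAction.stabilizer G y := inf_le_right.trans (ballStab_le_stab hconn y)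
  have hyN : y ∈ Γ.neighborSet x := hxy
  have hxN : x ∈ Γ.neighborSet y := hxy.symm
  -- K is normalized by the stabilizer of x
  have hNx : ∀ g ∈ MulAction.stabilizer G x, cj g K = K := by
    intro g hg
    have hgx : g • x = x := hg
    have hgy : g • y ∈ Γ.neighborSet x := by
      have := nbr_smul hP g hyN
      rwa [hgx] at this
    obtain ⟨c, hcC, hcm⟩ := hT y hyN (g • y) hgy
    have hcx : c • x = x := hcC.1
    have h3 : cj g K = ballStab Γ G x 1 ⊓ ballStab Γ G (g • y) 1 := by
      rw [hK, cj_inf, cj_ballStab hconn hP, cj_ballStab hconn hP, hgx]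
    have h4 : cj c K = ballStab Γ G x 1 ⊓ ballStab Γ G (g • y) 1 := by
      rw [hK, cj_inf, cj_ballStab hconn hP, cj_ballStab hconn hP, hcx, hcm]
    have h5 : cj c K = K := cj_of_le_centralizer hcC.2 hKQx
    rw [h3, ← h4, h5]
  -- transport transitivity to y
  obtain ⟨h, hh⟩ := hloc.2.1.exists_smul_eq (α := V) x y
  have hTy : TransOnNbrs Γ G
      (MulAction.stabilizer G y ⊓ Subgroup.centralizer ((Q y : Subgroup ↥G) : Set ↥G)) y := by
    have h6 := trans_transport hP h hh hT
    have h7 : cj h (MulAction.stabilizer G x ⊓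
        Subgroup.centralizer ((Q x : Subgroup ↥G) : Set ↥G)) =
        MulAction.stabilizer G y ⊓
          Subgroup.centralizer ((Q y : Subgroup ↥G) : Set ↥G) := by
      rw [cj_inf, cj_stab, cj_centralizer_Q hconn hP Q hQle hQp hQnorm hQmax, hh]
    rwa [h7] at h6
  have hNy : ∀ g ∈ MulAction.stabilizer G y, cj g K = K := by
    intro g hg
    have hgy : g • y = y := hg
    have hgx : g • x ∈ Γ.neighborSet y := by
      have := nbr_smul hP g hxN
      rwa [hgy] at this
    obtain ⟨c, hcC, hcm⟩ := hTy x hxN (g • x) hgx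
    have hcy : c • y = y := hcC.1
    have h3 : cj g K = ballStab Γ G (g • x) 1 ⊓ ballStab Γ G y 1 := by
      rw [hK, cj_inf, cj_ballStab hconn hP, cj_ballStab hconn hP, hgy]
    have h4 : cj c K = ballStab Γ G (g • x) 1 ⊓ ballStab Γ G y 1 := by
      rw [hK, cj_inf, cj_ballStab hconn hP, cj_ballStab hconn hP, hcy, hcm]
    have h5 : cj c K = K := cj_of_le_centralizer hcC.2 hKQy
    rw [h3, ← h4, h5]
  exact hne (global_triv hconn hloc hxy K hKsx hKsy hNx hNy)

lemma part1semireg (hn : 4 ≤ n) (hconn : Γ.Connected) (hloc : IsLocallyOPairs n Γ G)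
    {x y : V} (hxy : Γ.Adj x y)
    (hne : ballStab Γ G x 1 ⊓ ballStab Γ G y 1 ≠ ⊥)
    (hpgrp : IsPGroup p ↥(ballStab Γ G x 1 ⊓ ballStab Γ G y 1))
    (Q : V → Subgroup G)
    (hQle : ∀ v, Q v ≤ ballStab Γ G v 1)
    (hQp : ∀ v, IsPGroup p (Q v))
    (hQnorm : ∀ v, ∀ g ∈ ballStab Γ G v 1, ∀ k ∈ Q v, g * k * g⁻¹ ∈ Q v)
    (hQmax : ∀ v, ∀ R : Subgroup G, R ≤ ballStab Γ G v 1 → IsPGroup p R →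
      (∀ g ∈ ballStab Γ G v 1, ∀ k ∈ R, g * k * g⁻¹ ∈ R) → R ≤ Q v) :
    SemiregOnNbrs Γ G
      (MulAction.stabilizer G x ⊓ Subgroup.centralizer ((Q x : Subgroup ↥G) : Set ↥G)) x := by
  apply semireg_core hn hloc x _ inf_le_left
  · intro g hg
    have hgx : g • x = x := hg
    rw [cj_inf, cj_stab, cj_centralizer_Q hconn hloc.1 Q hQle hQp hQnorm hQmax, hgx]
  · exact part1trans hn hconn hloc hxy hne hpgrp Q hQle hQp hQnorm hQmax

end Main2

section PGroupStuff

variable {Gp : Type*} [Group Gp]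

lemma omega1_ne_bot [Finite Gp] {p : ℕ} (hp : p.Prime) {H : Subgroup Gp}
    (hH : IsPGroup p H) (hne : H ≠ ⊥) : ∃ z : Gp, z ≠ 1 ∧ z ∈ omega1 p H := by
  haveI := Fact.mk hp
  haveI : Nontrivial ↥H := (Subgroup.nontrivial_iff_ne_bot H).mpr hne
  haveI := IsPGroup.center_nontrivial hH
  obtain ⟨z, hz1⟩ := exists_ne (1 : Subgroup.center ↥H)
  set z0 : Gp := ((z : ↥H) : Gp) with hz0
  have hz0H : z0 ∈ H := (z : ↥H).2
  have hz0C : z0 ∈ Subgroup.centralizer (H : Set Gp) := by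
    rw [Subgroup.mem_centralizer_iff]
    intro h hh
    have h1 := Subgroup.mem_center_iff.mp z.2 ⟨h, hh⟩
    exact congrArg Subtype.val h1
  have hz0ne : z0 ≠ 1 := by
    intro h
    apply hz1
    apply Subtype.ext
    apply Subtype.ext
    exact h
  obtain ⟨k, hk⟩ := hH ⟨z0, hz0H⟩
  have hk' : z0 ^ p ^ k = 1 := by
    have := congrArg Subtype.val hk
    simpa using this
  classical
  have hex : ∃ m, z0 ^ p ^ m = 1 := ⟨k, hk'⟩
  set k0 := Nat.find hex with hk0def
  have hk0 : z0 ^ p ^ k0 = 1 := Nat.find_spec hex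
  have hk0ne : k0 ≠ 0 := by
    intro h
    rw [h, pow_zero, pow_one] at hk0
    exact hz0ne hk0
  set z1 := z0 ^ p ^ (k0 - 1) with hz1def
  have hz1p : z1 ^ p = 1 := by
    have he : k0 - 1 + 1 = k0 := by omega
    rw [hz1def, ← pow_mul, ← pow_succ, he]
    exact hk0
  have hz1ne : z1 ≠ 1 := Nat.find_min hex (Nat.pred_lt hk0ne)
  exact ⟨z1, hz1ne, (mem_omega1 p).mpr
    ⟨pow_mem hz0H _, pow_mem hz0C _, hz1p⟩⟩

lemma exists_central_fixed [Finite Gp] {p : ℕ} (hp : p.Prime) (S N : Subgroup Gp)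
    (hSp : IsPGroup p S) (hNp : IsPGroup p N)
    (hNnontriv : ∃ z0 : Gp, z0 ≠ 1 ∧ z0 ∈ N)
    (hnorm : ∀ s ∈ S, ∀ k ∈ N, s * k * s⁻¹ ∈ N) :
    ∃ z : Gp, z ≠ 1 ∧ z ∈ N ∧ ∀ s ∈ S, s * z * s⁻¹ = z := by
  haveI := Fact.mk hp
  letI sm : SMul ↥S ↥N := ⟨fun s z => ⟨s.1 * z.1 * s.1⁻¹, hnorm s.1 s.2 z.1 z.2⟩⟩
  have smul_def : ∀ (s : ↥S) (z : ↥N), (s • z : ↥N).1 = s.1 * z.1 * s.1⁻¹ := fun _ _ => rfl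
  letI act : MulAction ↥S ↥N :=
    { one_smul := fun b => by
        apply Subtype.ext
        rw [smul_def]
        simp
      mul_smul := fun s t b => by
        apply Subtype.ext
        rw [smul_def, smul_def, smul_def]
        push_cast
        group }
  have h1fix : (⟨1, one_mem N⟩ : ↥N) ∈ MulAction.fixedPoints ↥S ↥N := by
    intro s
    apply Subtype.ext
    rw [smul_def]
    group
  have hdvd : p ∣ Nat.card ↥N := by
    obtain ⟨z0, hz0ne, hz0N⟩ := hNnontriv
    haveI : Nontrivial ↥N :=
      ⟨⟨⟨z0, hz0N⟩, 1, fun h => hz0ne (by simpa using congrArg Subtype.val h)⟩⟩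
    obtain ⟨m, hm⟩ := IsPGroup.iff_card.mp hNp
    rcases Nat.eq_zero_or_pos m with rfl | hm0
    · exfalso
      rw [pow_zero] at hm
      have := Finite.one_lt_card (α := ↥N)
      omega
    · rw [hm]
      exact dvd_pow_self p hm0.ne'
  obtain ⟨b, hbfix, hbne⟩ :=
    hSp.exists_fixed_point_of_prime_dvd_card_of_fixed_point (↥N) hdvd h1fix
  refine ⟨b.1, ?_, b.2, ?_⟩
  · intro h
    exact hbne (Subtype.ext h.symm)
  · intro s hs
    have := hbfix ⟨s, hs⟩
    exact congrArg Subtype.val this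

end PGroupStuff

section Main3

variable {V : Type*} {n : ℕ} {Γ : SimpleGraph V} {G : Subgroup (Equiv.Perm V)} {p : ℕ}

lemma cj_eq_of_norm {Gp : Type*} [Group Gp] {Hb K : Subgroup Gp}
    (hnorm : ∀ g ∈ Hb, ∀ k ∈ K, g * k * g⁻¹ ∈ K) {m : Gp} (hm : m ∈ Hb) : cj m K = K := by
  apply le_antisymm
  · intro k hk
    rw [mem_cj] at hk
    have h1 := hnorm m hm _ hk
    rwa [show m * (m⁻¹ * k * m) * m⁻¹ = k by group] at h1
  · intro k hk
    rw [mem_cj]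
    have h1 := hnorm m⁻¹ (inv_mem hm) k hk
    rwa [show m⁻¹ * k * m⁻¹⁻¹ = m⁻¹ * k * m by group] at h1

lemma inv_fix {g : ↥G} {v : V} (h : g • v = v) : g⁻¹ • v = v := by
  have h2 := congrArg (fun z => g⁻¹ • z) h
  simpa using h2.symm

lemma cj_Z (hconn : Γ.Connected) (hP : PreservesAdj Γ G)
    (Q : V → Subgroup G)
    (hQle : ∀ v, Q v ≤ ballStab Γ G v 1)
    (hQp : ∀ v, IsPGroup p (Q v))
    (hQnorm : ∀ v, ∀ g ∈ ballStab Γ G v 1, ∀ k ∈ Q v, g * k * g⁻¹ ∈ Q v)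
    (hQmax : ∀ v, ∀ R : Subgroup G, R ≤ ballStab Γ G v 1 → IsPGroup p R →
      (∀ g ∈ ballStab Γ G v 1, ∀ k ∈ R, g * k * g⁻¹ ∈ R) → R ≤ Q v)
    (g : ↥G) (v : V) : cj g (omega1 p (Q v)) = omega1 p (Q (g • v)) := by
  rw [cj_omega1, cj_Q hconn hP Q hQle hQp hQnorm hQmax]

lemma Qy_le_S (hconn : Γ.Connected) (hP : PreservesAdj Γ G)
    {x y : V} (hxy : Γ.Adj x y)
    (Q : V → Subgroup G)
    (hQle : ∀ v, Q v ≤ ballStab Γ G v 1)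
    (hQp : ∀ v, IsPGroup p (Q v))
    (hQnorm : ∀ v, ∀ g ∈ ballStab Γ G v 1, ∀ k ∈ Q v, g * k * g⁻¹ ∈ Q v)
    (hQmax : ∀ v, ∀ R : Subgroup G, R ≤ ballStab Γ G v 1 → IsPGroup p R →
      (∀ g ∈ ballStab Γ G v 1, ∀ k ∈ R, g * k * g⁻¹ ∈ R) → R ≤ Q v)
    (Sxy : Subgroup G)
    (hSmax : ∀ R : Subgroup G, R ≤ MulAction.stabilizer G x ⊓ MulAction.stabilizer G y →
      IsPGroup p R →
      (∀ g ∈ MulAction.stabilizer G x ⊓ MulAction.stabilizer G y, ∀ k ∈ R, g * k * g⁻¹ ∈ R) →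
      R ≤ Sxy) :
    Q y ≤ Sxy := by
  apply hSmax
  · exact le_inf ((hQle y).trans (ballStab_le_stab_adj hconn hxy.symm))
      ((hQle y).trans (ballStab_le_stab hconn y))
  · exact hQp y
  · intro g hg k hk
    have hgy : g • y = y := hg.2
    have h1 : cj g (Q y) = Q y := by
      rw [cj_Q hconn hP Q hQle hQp hQnorm hQmax, hgy]
    rw [← h1, mem_cj]
    have h2 : g⁻¹ * (g * k * g⁻¹) * g = k := by group
    rwa [h2]

lemma part2trans [Fintype V] (hn : 4 ≤ n) (hconn : Γ.Connected) (hloc : IsLocallyOPairs n Γ G)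
    {x y : V} (hxy : Γ.Adj x y) (hp : p.Prime)
    (hne : ballStab Γ G x 1 ⊓ ballStab Γ G y 1 ≠ ⊥)
    (hpgrp : IsPGroup p ↥(ballStab Γ G x 1 ⊓ ballStab Γ G y 1))
    (Q : V → Subgroup G)
    (hQle : ∀ v, Q v ≤ ballStab Γ G v 1)
    (hQp : ∀ v, IsPGroup p (Q v))
    (hQnorm : ∀ v, ∀ g ∈ ballStab Γ G v 1, ∀ k ∈ Q v, g * k * g⁻¹ ∈ Q v)
    (hQmax : ∀ v, ∀ R : Subgroup G, R ≤ ballStab Γ G v 1 → IsPGroup p R →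
      (∀ g ∈ ballStab Γ G v 1, ∀ k ∈ R, g * k * g⁻¹ ∈ R) → R ≤ Q v)
    (hQcent : ∀ v, ballStab Γ G v 1 ⊓ Subgroup.centralizer ((Q v : Subgroup ↥G) : Set ↥G) ≤ Q v)
    (Sxy : Subgroup G)
    (hSle : Sxy ≤ MulAction.stabilizer G x ⊓ MulAction.stabilizer G y)
    (hSp : IsPGroup p Sxy)
    (hSnorm : ∀ g ∈ MulAction.stabilizer G x ⊓ MulAction.stabilizer G y,
      ∀ k ∈ Sxy, g * k * g⁻¹ ∈ Sxy)
    (hSmax : ∀ R : Subgroup G, R ≤ MulAction.stabilizer G x ⊓ MulAction.stabilizer G y →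
      IsPGroup p R →
      (∀ g ∈ MulAction.stabilizer G x ⊓ MulAction.stabilizer G y, ∀ k ∈ R, g * k * g⁻¹ ∈ R) →
      R ≤ Sxy) :
    ¬ TransOnNbrs Γ G (MulAction.stabilizer G x ⊓
      Subgroup.centralizer ((omega1 p (Q x) : Subgroup ↥G) : Set ↥G)) x := by
  intro hT
  have hP := hloc.1
  have hpgrp' : IsPGroup p ↥(ballStab Γ G y 1 ⊓ ballStab Γ G x 1) := by rwa [inf_comm]
  have hne' : ballStab Γ G y 1 ⊓ ballStab Γ G x 1 ≠ ⊥ := by rwa [inf_comm]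
  have hKQx : ballStab Γ G x 1 ⊓ ballStab Γ G y 1 ≤ Q x :=
    K_le_Qx hconn hP hxy hpgrp Q hQmax
  have hQxne : Q x ≠ ⊥ := fun h0 => hne (le_bot_iff.mp (h0 ▸ hKQx))
  have hQxS : Q x ≤ Sxy := Q_le_S hconn hP hxy Q hQle hQp hQnorm hQmax Sxy hSmax
  have hQyS : Q y ≤ Sxy := Qy_le_S hconn hP hxy Q hQle hQp hQnorm hQmax Sxy hSmax
  have hSstx : Sxy ≤ MulAction.stabilizer G x := hSle.trans inf_le_left
  have hSsty : Sxy ≤ MulAction.stabilizer G y := hSle.trans inf_le_right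
  have hZxQ : omega1 p (Q x) ≤ Q x := omega1_le p (Q x)
  have hZxstx : omega1 p (Q x) ≤ MulAction.stabilizer G x :=
    hZxQ.trans ((hQle x).trans (ballStab_le_stab hconn x))
  have hZcj : ∀ g : ↥G, g • x = x → cj g (omega1 p (Q x)) = omega1 p (Q x) := by
    intro g hg
    rw [cj_Z hconn hP Q hQle hQp hQnorm hQmax, hg]
  have hZnormS : ∀ s ∈ Sxy, ∀ k ∈ omega1 p (Q x), s * k * s⁻¹ ∈ omega1 p (Q x) := by
    intro s hs k hk
    have h1 := hZcj s (hSstx hs)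
    rw [← h1, mem_cj]
    have h2 : s⁻¹ * (s * k * s⁻¹) * s = k := by group
    rwa [h2]
  obtain ⟨z', hz'ne, hz'mem⟩ := omega1_ne_bot hp (hQp x) hQxne
  have hZp : IsPGroup p (omega1 p (Q x)) := (hQp x).to_le hZxQ
  obtain ⟨z, hzne, hzZx, hzcent⟩ :=
    exists_central_fixed hp Sxy (omega1 p (Q x)) hSp hZp ⟨z', hz'ne, hz'mem⟩ hZnormS
  have hzW : z ∈ omega1 p Sxy := by
    refine (mem_omega1 p).mpr ⟨hQxS (hZxQ hzZx), ?_, ((mem_omega1 p).mp hzZx).2.2⟩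
    rw [Subgroup.mem_centralizer_iff]
    intro s hs
    have h1 := hzcent s hs
    have h2 : s * z = (s * z * s⁻¹) * s := by group
    rw [h2, h1]
  have hAne : omega1 p (Q x) ⊓ omega1 p Sxy ≠ ⊥ := by
    intro h0
    apply hzne
    have h1 : z ∈ (⊥ : Subgroup ↥G) := h0 ▸ (Subgroup.mem_inf.mpr ⟨hzZx, hzW⟩)
    simpa using h1
  have hAZx : omega1 p (Q x) ⊓ omega1 p Sxy ≤ omega1 p (Q x) := inf_le_left
  have hAW : omega1 p (Q x) ⊓ omega1 p Sxy ≤ omega1 p Sxy := inf_le_right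
  have hAstx : omega1 p (Q x) ⊓ omega1 p Sxy ≤ MulAction.stabilizer G x := hAZx.trans hZxstx
  have hAsty : omega1 p (Q x) ⊓ omega1 p Sxy ≤ MulAction.stabilizer G y :=
    hAW.trans ((omega1_le p Sxy).trans hSsty)
  have hyN : y ∈ Γ.neighborSet x := hxy
  have hxN : x ∈ Γ.neighborSet y := hxy.symm
  have hWcjk : ∀ m ∈ MulAction.stabilizer G x ⊓ MulAction.stabilizer G y,
      cj m (omega1 p Sxy) = omega1 p Sxy := by
    intro m hm
    rw [cj_omega1, cj_eq_of_norm hSnorm hm]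
  -- A is normalized by the stabilizer of x
  have hNx : ∀ g ∈ MulAction.stabilizer G x,
      cj g (omega1 p (Q x) ⊓ omega1 p Sxy) = omega1 p (Q x) ⊓ omega1 p Sxy := by
    intro g hg
    have hgx : g • x = x := hg
    have hgyN : g • y ∈ Γ.neighborSet x := by
      have h1 := nbr_smul hP g hyN
      rwa [hgx] at h1
    obtain ⟨c, hcC, hcm⟩ := hT y hyN (g • y) hgyN
    have hcx : c • x = x := hcC.1
    have hkx : (c⁻¹ * g) • x = x := by rw [mul_smul, hgx]; exact inv_fix hcx
    have hky : (c⁻¹ * g) • y = y := by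
      rw [mul_smul, ← hcm, inv_smul_smul]
    have hkmem : c⁻¹ * g ∈ MulAction.stabilizer G x ⊓ MulAction.stabilizer G y := ⟨hkx, hky⟩
    have hdecomp : c * (c⁻¹ * g) = g := by group
    calc cj g (omega1 p (Q x) ⊓ omega1 p Sxy)
        = cj c (cj (c⁻¹ * g) (omega1 p (Q x) ⊓ omega1 p Sxy)) := by rw [cj_cj, hdecomp]
      _ = cj c (omega1 p (Q x) ⊓ omega1 p Sxy) := by
          rw [cj_inf, hZcj _ hkx, hWcjk _ hkmem]
      _ = omega1 p (Q x) ⊓ omega1 p Sxy := cj_of_le_centralizer hcC.2 hAZx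
  -- A fixes all neighbours of y
  have hsemiY : SemiregOnNbrs Γ G (MulAction.stabilizer G y ⊓
      Subgroup.centralizer ((Q y : Subgroup ↥G) : Set ↥G)) y :=
    part1semireg hn hconn hloc hxy.symm hne' hpgrp' Q hQle hQp hQnorm hQmax
  have hACQy : omega1 p (Q x) ⊓ omega1 p Sxy ≤ MulAction.stabilizer G y ⊓
      Subgroup.centralizer ((Q y : Subgroup ↥G) : Set ↥G) :=
    le_inf hAsty (hAW.trans ((omega1_le_centralizer p Sxy).trans
      (Subgroup.centralizer_le (SetLike.coe_subset_coe.mpr hQyS))))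
  have hAfixy : ∀ a ∈ omega1 p (Q x) ⊓ omega1 p Sxy, ∀ w ∈ Γ.neighborSet y, a • w = w := by
    intro a ha w hw
    exact hsemiY a (hACQy ha) x hxN (hAstx ha) w hw
  -- A ≤ Z y
  have hAZy : omega1 p (Q x) ⊓ omega1 p Sxy ≤ omega1 p (Q y) := by
    intro a ha
    have haB : a ∈ ballStab Γ G y 1 :=
      (mem_ballStab1 hconn).mpr ⟨hAsty ha, fun w hw => hAfixy a ha w hw⟩
    have haQy : a ∈ Q y := hQcent y ⟨haB, (hACQy ha).2⟩
    exact (mem_omega1 p).mpr ⟨haQy, (hACQy ha).2, ((mem_omega1 p).mp (hAW ha)).2.2⟩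
  -- transport transitivity to y
  obtain ⟨h, hh⟩ := hloc.2.1.exists_smul_eq (α := V) x y
  have hTy : TransOnNbrs Γ G (MulAction.stabilizer G y ⊓
      Subgroup.centralizer ((omega1 p (Q y) : Subgroup ↥G) : Set ↥G)) y := by
    have h6 := trans_transport hP h hh hT
    have h7 : cj h (MulAction.stabilizer G x ⊓
        Subgroup.centralizer ((omega1 p (Q x) : Subgroup ↥G) : Set ↥G)) =
        MulAction.stabilizer G y ⊓
          Subgroup.centralizer ((omega1 p (Q y) : Subgroup ↥G) : Set ↥G) := by
      rw [cj_inf, cj_stab, cj_centralizer, cj_Z hconn hP Q hQle hQp hQnorm hQmax, hh]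
    rwa [h7] at h6
  have hNy : ∀ g ∈ MulAction.stabilizer G y,
      cj g (omega1 p (Q x) ⊓ omega1 p Sxy) = omega1 p (Q x) ⊓ omega1 p Sxy := by
    intro g hg
    have hgy : g • y = y := hg
    have hgxN : g • x ∈ Γ.neighborSet y := by
      have h1 := nbr_smul hP g hxN
      rwa [hgy] at h1
    obtain ⟨d, hdC, hdm⟩ := hTy x hxN (g • x) hgxN
    have hdy : d • y = y := hdC.1
    have hkx : (d⁻¹ * g) • x = x := by
      rw [mul_smul, ← hdm, inv_smul_smul]
    have hky : (d⁻¹ * g) • y = y := by rw [mul_smul, hgy]; exact inv_fix hdy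
    have hkmem : d⁻¹ * g ∈ MulAction.stabilizer G x ⊓ MulAction.stabilizer G y := ⟨hkx, hky⟩
    have hdecomp : d * (d⁻¹ * g) = g := by group
    calc cj g (omega1 p (Q x) ⊓ omega1 p Sxy)
        = cj d (cj (d⁻¹ * g) (omega1 p (Q x) ⊓ omega1 p Sxy)) := by rw [cj_cj, hdecomp]
      _ = cj d (omega1 p (Q x) ⊓ omega1 p Sxy) := by
          rw [cj_inf, hZcj _ hkx, hWcjk _ hkmem]
      _ = omega1 p (Q x) ⊓ omega1 p Sxy := cj_of_le_centralizer hdC.2 hAZy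
  exact hAne (global_triv hconn hloc hxy _ hAstx hAsty hNx hNy)

end Main3

/-- with `Q_v` the largest normal `p`-subgroup of `G_v^{[1]}` (assumed
self-centralising in `G_v^{[1]}`), `S_{xy}` the largest normal `p`-subgroup of `G_{xy}`
(assumed self-centralising in `G_{xy}`), and `Z_x = Ω₁(Z(Q_x))`, the groups induced on
`Γ(x)` by `C_{G_x}(Q_x)` and by `C_{G_x}(Z_x)` are intransitive and semiregular. -/
theorem stmt_7 {V : Type*} [Fintype V] (n : ℕ) (hn : 4 ≤ n)
    (Γ : SimpleGraph V) (hconn : Γ.Connected)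
    (G : Subgroup (Equiv.Perm V)) (hloc : IsLocallyOPairs n Γ G)
    (x y : V) (hxy : Γ.Adj x y) (p : ℕ) (hp : p.Prime)
    (hne : ballStab Γ G x 1 ⊓ ballStab Γ G y 1 ≠ ⊥)
    (hpgrp : IsPGroup p ↥(ballStab Γ G x 1 ⊓ ballStab Γ G y 1))
    (Q : V → Subgroup G)
    (hQle : ∀ v, Q v ≤ ballStab Γ G v 1)
    (hQp : ∀ v, IsPGroup p (Q v))
    (hQnorm : ∀ v, ∀ g ∈ ballStab Γ G v 1, ∀ k ∈ Q v, g * k * g⁻¹ ∈ Q v)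
    (hQmax : ∀ v, ∀ R : Subgroup G, R ≤ ballStab Γ G v 1 → IsPGroup p R →
      (∀ g ∈ ballStab Γ G v 1, ∀ k ∈ R, g * k * g⁻¹ ∈ R) → R ≤ Q v)
    (hQcent : ∀ v, ballStab Γ G v 1 ⊓ Subgroup.centralizer (Q v : Set G) ≤ Q v)
    (Sxy : Subgroup G)
    (hSle : Sxy ≤ MulAction.stabilizer G x ⊓ MulAction.stabilizer G y)
    (hSp : IsPGroup p Sxy)
    (hSnorm : ∀ g ∈ MulAction.stabilizer G x ⊓ MulAction.stabilizer G y,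
      ∀ k ∈ Sxy, g * k * g⁻¹ ∈ Sxy)
    (hSmax : ∀ R : Subgroup G, R ≤ MulAction.stabilizer G x ⊓ MulAction.stabilizer G y →
      IsPGroup p R →
      (∀ g ∈ MulAction.stabilizer G x ⊓ MulAction.stabilizer G y, ∀ k ∈ R, g * k * g⁻¹ ∈ R) →
      R ≤ Sxy)
    (hScent : (MulAction.stabilizer G x ⊓ MulAction.stabilizer G y) ⊓
      Subgroup.centralizer (Sxy : Set G) ≤ Sxy)
    (Zx : Subgroup G)
    (hZx : Zx = Subgroup.closure
      {g : G | g ∈ Q x ⊓ Subgroup.centralizer (Q x : Set G) ∧ g ^ p = 1}) :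
    (¬ TransOnNbrs Γ G (MulAction.stabilizer G x ⊓ Subgroup.centralizer (Q x : Set G)) x ∧
      SemiregOnNbrs Γ G (MulAction.stabilizer G x ⊓ Subgroup.centralizer (Q x : Set G)) x) ∧
    (¬ TransOnNbrs Γ G (MulAction.stabilizer G x ⊓ Subgroup.centralizer (Zx : Set G)) x ∧
      SemiregOnNbrs Γ G (MulAction.stabilizer G x ⊓ Subgroup.centralizer (Zx : Set G)) x) := by
  have hP := hloc.1
  have hZeq : Zx = omega1 p (Q x) := by
    rw [hZx]
    have hset : {g : G | g ∈ Q x ⊓ Subgroup.centralizer (Q x : Set G) ∧ g ^ p = 1}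
        = ((omega1 p (Q x) : Subgroup ↥G) : Set ↥G) := by
      ext g
      simp only [Set.mem_setOf_eq, Subgroup.mem_inf, SetLike.mem_coe, mem_omega1]
      tauto
    rw [hset, Subgroup.closure_eq]
  constructor
  · exact ⟨part1trans hn hconn hloc hxy hne hpgrp Q hQle hQp hQnorm hQmax,
      part1semireg hn hconn hloc hxy hne hpgrp Q hQle hQp hQnorm hQmax⟩
  · rw [hZeq]
    constructor
    · exact part2trans hn hconn hloc hxy hp hne hpgrp Q hQle hQp hQnorm hQmax hQcent
        Sxy hSle hSp hSnorm hSmax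
    · apply semireg_core hn hloc x _ inf_le_left
      · intro g hg
        have hgx : g • x = x := hg
        rw [cj_inf, cj_stab, cj_centralizer, cj_Z hconn hP Q hQle hQp hQnorm hQmax, hgx]
      · exact part2trans hn hconn hloc hxy hp hne hpgrp Q hQle hQp hQnorm hQmax hQcent
          Sxy hSle hSp hSnorm hSmax
end

section
/- Let n ≥ 4, let L be the permutation group induced by Sym(n) on ordered pairs of distinct elements of {1,…,n}, let (Γ,G) be a locally L pair, let {x,y} be an edge of Γ, and let p be a prime with (n,p) ∈ {(4,2),(5,3),(6,2)} such that G_{xy}^{[1]} is a nontrivial p-group. For each vertex v let Q_v denote the largest normal p-subgroup of G_v^{[1]}, assume C_{G_v^{[1]}}(Q_v) ≤ Q_v for every vertex v, and let S_{xy} denote the largest normal p-subgroup of G_{xy}, assumed to satisfy C_{G_{xy}}(S_{xy}) ≤ S_{xy}. Then S_{xy} = Q_x Q_y. -/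
open MulAction Pointwise

open Equiv MulAction

namespace Stmt10Aux


variable {n m : ℕ} (a b : Fin n) (hab : a ≠ b)

/-- vertices other than a, b -/
abbrev Pred (a b : Fin n) : Fin n → Prop := fun i => i ≠ a ∧ i ≠ b

lemma card_pred (hab : a ≠ b) (hnm : m + 2 = n) :
    Fintype.card {i : Fin n // Pred a b i} = m := by
  have h1 : (Finset.univ.filter fun i : Fin n => Pred a b i) = ({a, b} : Finset (Fin n))ᶜ := by
    ext i
    simp [Pred, not_or]
  rw [Fintype.card_subtype, h1, Finset.card_compl, Finset.card_pair hab, Fintype.card_fin]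
  omega

lemma pred_iff {σ : Perm (Fin n)} (ha : σ a = a) (hb : σ b = b) :
    ∀ i, Pred a b i ↔ Pred a b (σ i) := by
  intro i
  constructor
  · rintro ⟨h1, h2⟩
    constructor
    · intro h; exact h1 (σ.injective (h.trans ha.symm))
    · intro h; exact h2 (σ.injective (h.trans hb.symm))
  · rintro ⟨h1, h2⟩
    constructor
    · rintro rfl; exact h1 ha
    · rintro rfl; exact h2 hb

/-- stabiliser of the pair -/
abbrev D (a b : Fin n) : Subgroup (Perm (Fin n)) :=
  MulAction.stabilizer (Perm (Fin n)) a ⊓ MulAction.stabilizer (Perm (Fin n)) b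

lemma mem_D {σ : Perm (Fin n)} : σ ∈ D a b ↔ σ a = a ∧ σ b = b := by
  simp [D, MulAction.mem_stabilizer_iff, Perm.smul_def]

variable (c : {i : Fin n // Pred a b i} ≃ Fin m)

/-- transfer to the permutation group of the complement -/
def theta (c : {i : Fin n // Pred a b i} ≃ Fin m) : D a b →* Perm (Fin m) where
  toFun σ := c.permCongr ((σ : Perm (Fin n)).subtypePerm
      (fun i => (pred_iff a b ((mem_D a b).mp σ.2).1 ((mem_D a b).mp σ.2).2 i).symm))
  map_one' := by
    ext i
    simp
  map_mul' σ τ := by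
    ext i
    simp [Perm.mul_apply]

lemma theta_apply (σ : D a b) (i : {i : Fin n // Pred a b i}) :
    theta a b c σ (c i) = c ⟨(σ : Perm (Fin n)) i, (pred_iff a b ((mem_D a b).mp σ.2).1
      ((mem_D a b).mp σ.2).2 i).mp i.2⟩ := by
  simp [theta]

lemma theta_injective : Function.Injective (theta a b c) := by
  rw [injective_iff_map_eq_one]
  intro σ hσ
  rcases (mem_D a b).mp σ.2 with ⟨ha, hb⟩
  apply Subtype.ext
  apply Equiv.ext
  intro i
  by_cases hia : i = a
  · subst hia; simpa using ha
  by_cases hib : i = b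
  · subst hib; simpa using hb
  · have h := theta_apply a b c σ ⟨i, hia, hib⟩
    rw [hσ] at h
    simp only [Perm.one_apply] at h
    have h2 := c.injective h
    have h3 : i = (σ : Perm (Fin n)) i := congrArg Subtype.val h2
    exact h3.symm

lemma theta_surjective : Function.Surjective (theta a b c) := by
  intro g
  classical
  set u : Perm {i : Fin n // Pred a b i} := c.permCongr.symm g with hu
  have hmem : Perm.ofSubtype u ∈ D a b := by
    rw [mem_D]
    constructor
    · exact Perm.ofSubtype_apply_of_not_mem u (by simp [Pred])
    · exact Perm.ofSubtype_apply_of_not_mem u (by simp [Pred])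
  refine ⟨⟨Perm.ofSubtype u, hmem⟩, ?_⟩
  ext i
  have h1 : ((⟨Perm.ofSubtype u, hmem⟩ : D a b) : Perm (Fin n)).subtypePerm
      (fun i => (pred_iff a b ((mem_D a b).mp hmem).1 ((mem_D a b).mp hmem).2 i).symm) = u := by
    ext z
    simp [Perm.subtypePerm_apply]
  simp only [theta, MonoidHom.coe_mk, OneHom.coe_mk, h1, hu]
  simp

lemma theta_fixfree_iff (σ : D a b) :
    (∀ i, theta a b c σ i ≠ i) ↔ ∀ j : Fin n, j ≠ a → j ≠ b → (σ : Perm (Fin n)) j ≠ j := by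
  constructor
  · intro h j hja hjb he
    apply h (c ⟨j, hja, hjb⟩)
    rw [theta_apply]
    congr 1
    exact Subtype.ext he
  · intro h i he
    obtain ⟨z, rfl⟩ := c.surjective i
    rw [theta_apply] at he
    exact h z z.2.1 z.2.2 (congrArg Subtype.val (c.injective he))


section KEYS

lemma pow_small {q : ℕ} (hq : q.Prime) {m : ℕ} (w : Perm (Fin m)) (k : ℕ)
    (h : w ^ q ^ k = 1) (e M : ℕ) (hcard : (Fintype.card (Fin m)).factorial = M)
    (hdvd : ¬ (q ^ (e + 1) ∣ M)) : w ^ q ^ e = 1 := by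
  have hd : orderOf w ∣ q ^ k := orderOf_dvd_of_pow_eq_one h
  obtain ⟨j, _, hw⟩ := (Nat.dvd_prime_pow hq).mp hd
  have hc : orderOf w ∣ M := by
    have h2 := orderOf_dvd_card (x := w)
    rwa [Fintype.card_perm, hcard] at h2
  have hje : j ≤ e := by
    by_contra hje
    exact hdvd (dvd_trans (pow_dvd_pow q (by omega)) (hw ▸ hc))
  exact orderOf_dvd_iff_pow_eq_one.mp (hw ▸ pow_dvd_pow q hje)

set_option maxRecDepth 10000 in
private lemma fact2 : ∀ u v : Perm (Fin 2), u ≠ 1 → (v = 1 ∨ v = u) := by decide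

set_option maxRecDepth 10000 in
private lemma fact3 : ∀ u v : Perm (Fin 3), u ^ 3 = 1 → u ≠ 1 → v ^ 3 = 1 →
    (v = 1 ∨ v = u ∨ v = u * u) := by decide

set_option maxRecDepth 10000 in
private lemma fact4a : ∀ u : Perm (Fin 4), u ^ 8 = 1 → u ^ 4 = 1 := by decide

set_option maxRecDepth 10000 in
private lemma fact4b : ∀ u : Perm (Fin 4), u ^ 4 = 1 → u ≠ 1 → ¬(u ^ 2 = 1 ∧ ∀ i, u i ≠ i) →
    ∃ g : Perm (Fin 4), (g * u * g⁻¹ * u) ^ 4 ≠ 1 := by decide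

set_option maxRecDepth 10000 in
private lemma fact4c : ∀ u v : Perm (Fin 4), u ^ 2 = 1 → (∀ i, u i ≠ i) → v ^ 2 = 1 →
    (∀ i, v i ≠ i) → ∃ g : Perm (Fin 4), g * u * g⁻¹ = v := by decide

variable {n : ℕ} {a b : Fin n} (hab : a ≠ b) {N M : Subgroup (Perm (Fin n))}

/-- case n = 4 -/
lemma key4 (hab : a ≠ b) (hn : n = 4) (hN : ∀ x ∈ N, x a = a ∧ x b = b) (hM : ∀ x ∈ M, x a = a ∧ x b = b)
    (hMne : ∃ u ∈ M, u ≠ 1) : N ≤ M := by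
  subst hn
  have c : {i : Fin 4 // Pred a b i} ≃ Fin 2 := Fintype.equivFinOfCardEq (card_pred a b hab rfl)
  obtain ⟨u, huM, hu1⟩ := hMne
  set U : D a b := ⟨u, (mem_D a b).mpr (hM u huM)⟩ with hU
  intro x hx
  set X : D a b := ⟨x, (mem_D a b).mpr (hN x hx)⟩ with hX
  have hU1 : theta a b c U ≠ 1 := by
    intro h
    exact hu1 (congrArg Subtype.val (theta_injective a b c (h.trans (map_one _).symm)))
  rcases fact2 (theta a b c U) (theta a b c X) hU1 with h | h
  · have : X = 1 := theta_injective a b c (h.trans (map_one _).symm)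
    have : x = 1 := congrArg Subtype.val this
    rw [this]; exact one_mem M
  · have : X = U := theta_injective a b c h
    have : x = u := congrArg Subtype.val this
    rw [this]; exact huM

/-- case n = 5, p = 3 -/
lemma key5 (hab : a ≠ b) (hn : n = 5) (hN : ∀ x ∈ N, x a = a ∧ x b = b) (hM : ∀ x ∈ M, x a = a ∧ x b = b)
    (hNpow : ∀ x ∈ N, ∃ k, x ^ 3 ^ k = 1) (hMpow : ∀ x ∈ M, ∃ k, x ^ 3 ^ k = 1)
    (hMne : ∃ u ∈ M, u ≠ 1) : N ≤ M := by
  subst hn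
  have c : {i : Fin 5 // Pred a b i} ≃ Fin 3 := Fintype.equivFinOfCardEq (card_pred a b hab rfl)
  obtain ⟨u, huM, hu1⟩ := hMne
  set U : D a b := ⟨u, (mem_D a b).mpr (hM u huM)⟩ with hU
  have hpow3 : ∀ (z : Perm (Fin 5)) (hz : z ∈ D a b), (∃ k, z ^ 3 ^ k = 1) →
      (theta a b c ⟨z, hz⟩) ^ 3 = 1 := by
    rintro z hz ⟨k, hk⟩
    have hZ : (⟨z, hz⟩ : D a b) ^ 3 ^ k = 1 := by
      apply Subtype.ext
      simpa using hk
    have : (theta a b c ⟨z, hz⟩) ^ 3 ^ k = 1 := by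
      rw [← map_pow, hZ, map_one]
    have := pow_small Nat.prime_three (theta a b c ⟨z, hz⟩) k this 1 6
      (by norm_num [Nat.factorial]) (by norm_num)
    simpa using this
  have hU3 : theta a b c U ^ 3 = 1 := hpow3 u U.2 (hMpow u huM)
  have hU1 : theta a b c U ≠ 1 := by
    intro h
    exact hu1 (congrArg Subtype.val (theta_injective a b c (h.trans (map_one _).symm)))
  intro x hx
  set X : D a b := ⟨x, (mem_D a b).mpr (hN x hx)⟩ with hX
  have hX3 : theta a b c X ^ 3 = 1 := hpow3 x X.2 (hNpow x hx)
  rcases fact3 (theta a b c U) (theta a b c X) hU3 hU1 hX3 with h | h | h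
  · have : x = 1 := congrArg Subtype.val (theta_injective a b c (h.trans (map_one _).symm))
    rw [this]; exact one_mem M
  · have : x = u := congrArg Subtype.val (theta_injective a b c h)
    rw [this]; exact huM
  · have : X = U * U := theta_injective a b c (by rw [map_mul]; exact h)
    have : x = u * u := congrArg Subtype.val this
    rw [this]; exact mul_mem huM huM

/-- case n = 6, p = 2 -/
lemma key6 (hab : a ≠ b) (hn : n = 6) (hN : ∀ x ∈ N, x a = a ∧ x b = b) (hM : ∀ x ∈ M, x a = a ∧ x b = b)
    (hNpow : ∀ x ∈ N, ∃ k, x ^ 2 ^ k = 1) (hMpow : ∀ x ∈ M, ∃ k, x ^ 2 ^ k = 1)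
    (hNnorm : ∀ σ : Perm (Fin n), σ a = a → σ b = b → ∀ τ ∈ N, σ * τ * σ⁻¹ ∈ N)
    (hMnorm : ∀ σ : Perm (Fin n), σ a = a → σ b = b → ∀ τ ∈ M, σ * τ * σ⁻¹ ∈ M)
    (hMne : ∃ u ∈ M, u ≠ 1) : N ≤ M := by
  subst hn
  have c : {i : Fin 6 // Pred a b i} ≃ Fin 4 := Fintype.equivFinOfCardEq (card_pred a b hab rfl)
  -- transfer the power condition
  have hpow4 : ∀ (z : D a b), (∃ k, (z : Perm (Fin 6)) ^ 2 ^ k = 1) →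
      (theta a b c z) ^ 4 = 1 := by
    rintro z ⟨k, hk⟩
    have hZ : z ^ 2 ^ k = 1 := by
      apply Subtype.ext
      simpa using hk
    have h8 : (theta a b c z) ^ 2 ^ k = 1 := by rw [← map_pow, hZ, map_one]
    have h8' := pow_small Nat.prime_two (theta a b c z) k h8 3 24
      (by norm_num [Nat.factorial]) (by norm_num)
    exact fact4a _ (by simpa using h8')
  -- every nontrivial element of a normal 2-subgroup of D maps to a f.p.f. involution
  have hdt : ∀ (R : Subgroup (Perm (Fin 6))), (∀ x ∈ R, ∃ k, x ^ 2 ^ k = 1) →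
      (∀ σ : Perm (Fin 6), σ a = a → σ b = b → ∀ τ ∈ R, σ * τ * σ⁻¹ ∈ R) →
      ∀ z : D a b, (z : Perm (Fin 6)) ∈ R → z ≠ 1 →
      (theta a b c z) ^ 2 = 1 ∧ ∀ i, theta a b c z i ≠ i := by
    intro R hRpow hRnorm z hzR hz1
    have h4 : (theta a b c z) ^ 4 = 1 := hpow4 z (hRpow _ hzR)
    have h1 : theta a b c z ≠ 1 := by
      intro h
      exact hz1 (theta_injective a b c (h.trans (map_one _).symm))
    by_contra hcon
    obtain ⟨g, hg⟩ := fact4b (theta a b c z) h4 h1 (by tauto)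
    obtain ⟨σ, hσ⟩ := theta_surjective a b c g
    have hσD := (mem_D a b).mp σ.2
    have hτR : ((σ * z * σ⁻¹ * z : D a b) : Perm (Fin 6)) ∈ R := by
      push_cast
      exact mul_mem (hRnorm _ hσD.1 hσD.2 _ hzR) hzR
    have hτ4 : (theta a b c (σ * z * σ⁻¹ * z)) ^ 4 = 1 := hpow4 _ (hRpow _ hτR)
    rw [map_mul, map_mul, map_mul, map_inv, hσ] at hτ4
    exact hg hτ4
  obtain ⟨u, huM, hu1⟩ := hMne
  set U : D a b := ⟨u, (mem_D a b).mpr (hM u huM)⟩ with hU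
  obtain ⟨hu2, hufpf⟩ := hdt M hMpow hMnorm U huM
    (fun h => hu1 (congrArg Subtype.val h))
  intro x hx
  by_cases hx1 : x = 1
  · rw [hx1]; exact one_mem M
  set X : D a b := ⟨x, (mem_D a b).mpr (hN x hx)⟩ with hX
  obtain ⟨hx2, hxfpf⟩ := hdt N hNpow hNnorm X hx
    (fun h => hx1 (congrArg Subtype.val h))
  obtain ⟨g, hg⟩ := fact4c (theta a b c U) (theta a b c X) hu2 hufpf hx2 hxfpf
  obtain ⟨σ, hσ⟩ := theta_surjective a b c g
  have hσD := (mem_D a b).mp σ.2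
  have : theta a b c (σ * U * σ⁻¹) = theta a b c X := by
    rw [map_mul, map_mul, map_inv, hσ]; exact hg
  have hXU : σ * U * σ⁻¹ = X := theta_injective a b c this
  have hcoe : (σ : Perm (Fin 6)) * u * (σ : Perm (Fin 6))⁻¹ = x := by
    have := congrArg Subtype.val hXU
    simpa using this
  rw [← hcoe]
  exact hMnorm _ hσD.1 hσD.2 u huM

end KEYS


/-- transitivity of Sym(α) on ordered pairs of distinct elements. -/
lemma exists_perm_pair {α : Type*} [DecidableEq α] (a b c d : α) (hab : a ≠ b) (hcd : c ≠ d) :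
    ∃ σ : Perm α, σ a = c ∧ σ b = d := by
  refine ⟨swap (swap a c b) d * swap a c, ?_, ?_⟩
  · have h1 : c ≠ swap a c b := by
      intro h
      apply hab
      have h2 := congrArg (swap a c) h
      rwa [swap_apply_right, swap_apply_self] at h2
    rw [Perm.mul_apply, swap_apply_left]
    exact swap_apply_of_ne_of_ne h1 hcd
  · rw [Perm.mul_apply]
    exact swap_apply_left _ _

lemma opairs_smul_eq_iff {n : ℕ} (σ : Perm (Fin n)) (q : OPairs n) :
    σ • q = q ↔ σ q.1.1 = q.1.1 ∧ σ q.1.2 = q.1.2 := by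
  have h : σ • q = ⟨(σ q.1.1, σ q.1.2), fun h => q.2 (σ.injective h)⟩ := rfl
  rw [h, Subtype.ext_iff, Prod.ext_iff]

lemma opairs_smul_eq_of (σ : Perm (Fin n)) (q1 q2 : OPairs n)
    (h1 : σ q1.1.1 = q2.1.1) (h2 : σ q1.1.2 = q2.1.2) : σ • q1 = q2 := by
  have h : σ • q1 = ⟨(σ q1.1.1, σ q1.1.2), fun h => q1.2 (σ.injective h)⟩ := rfl
  rw [h]
  apply Subtype.ext
  rw [Prod.ext_iff]
  exact ⟨h1, h2⟩

variable {V : Type*} {Γ : SimpleGraph V} {G : Subgroup (Equiv.Perm V)}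

lemma smul_eq_apply (g : G) (v : V) : g • v = (g : Perm V) v := rfl

lemma adj_smul (hA : PreservesAdj Γ G) (g : G) (u v : V) :
    Γ.Adj u v ↔ Γ.Adj (g • u) (g • v) := hA (g : Perm V) g.2 u v

lemma mem_ballStab_iff (hconn : Γ.Connected) (g : G) (v : V) :
    g ∈ ballStab Γ G v 1 ↔ ∀ w, w = v ∨ Γ.Adj v w → g • w = w := by
  unfold ballStab
  simp only [Subgroup.mem_iInf, MulAction.mem_stabilizer_iff]
  constructor
  · intro h w hw
    apply h w
    rcases hw with rfl | hw
    · simp [SimpleGraph.dist_self]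
    · rw [SimpleGraph.dist_eq_one_iff_adj.mpr hw]
  · intro h w hd
    apply h w
    rcases Nat.le_one_iff_eq_zero_or_eq_one.mp hd with h0 | h1
    · left
      rcases SimpleGraph.dist_eq_zero_iff_eq_or_not_reachable.mp h0 with h' | h'
      · exact h'.symm
      · exact absurd (hconn v w) h'
    · right
      exact SimpleGraph.dist_eq_one_iff_adj.mp h1

lemma ballStab_le_stabilizer (hconn : Γ.Connected) (v w : V) (hw : w = v ∨ Γ.Adj v w) :
    ballStab Γ G v 1 ≤ MulAction.stabilizer G w := by
  intro g hg
  rw [MulAction.mem_stabilizer_iff]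
  exact (mem_ballStab_iff hconn g v).mp hg w hw

lemma ballStab_conj (hA : PreservesAdj Γ G) (hconn : Γ.Connected) (g h : G) (v : V)
    (hh : h ∈ ballStab Γ G v 1) : g * h * g⁻¹ ∈ ballStab Γ G (g • v) 1 := by
  rw [mem_ballStab_iff hconn] at hh ⊢
  intro w hw
  rcases hw with rfl | hw
  · rw [mul_smul, mul_smul, inv_smul_smul]
    rw [hh v (Or.inl rfl)]
  · have hu : g • (g⁻¹ • w) = w := smul_inv_smul g w
    have hadj : Γ.Adj v (g⁻¹ • w) := by
      rw [adj_smul hA g, hu]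
      exact hw
    rw [mul_smul, mul_smul, hh _ (Or.inr hadj), hu]


end Stmt10Aux

/-- with `(n,p) ∈ {(4,2),(5,3),(6,2)}`, `G_{xy}^{[1]}` a nontrivial
`p`-group, `Q_v` the largest normal `p`-subgroup of `G_v^{[1]}` (self-centralising in
`G_v^{[1]}`) and `S_{xy}` the largest normal `p`-subgroup of `G_{xy}` (self-centralising
in `G_{xy}`), we have `S_{xy} = Q_x Q_y` (as a product of subgroups). -/
theorem stmt_10 {V : Type*} [Fintype V] (n : ℕ) (hn : 4 ≤ n)
    (Γ : SimpleGraph V) (hconn : Γ.Connected)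
    (G : Subgroup (Equiv.Perm V)) (hloc : IsLocallyOPairs n Γ G)
    (x y : V) (hxy : Γ.Adj x y) (p : ℕ) (hp : p.Prime)
    (hnp : (n = 4 ∧ p = 2) ∨ (n = 5 ∧ p = 3) ∨ (n = 6 ∧ p = 2))
    (hne : ballStab Γ G x 1 ⊓ ballStab Γ G y 1 ≠ ⊥)
    (hpgrp : IsPGroup p ↥(ballStab Γ G x 1 ⊓ ballStab Γ G y 1))
    (Q : V → Subgroup G)
    (hQle : ∀ v, Q v ≤ ballStab Γ G v 1)
    (hQp : ∀ v, IsPGroup p (Q v))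
    (hQnorm : ∀ v, ∀ g ∈ ballStab Γ G v 1, ∀ k ∈ Q v, g * k * g⁻¹ ∈ Q v)
    (hQmax : ∀ v, ∀ R : Subgroup G, R ≤ ballStab Γ G v 1 → IsPGroup p R →
      (∀ g ∈ ballStab Γ G v 1, ∀ k ∈ R, g * k * g⁻¹ ∈ R) → R ≤ Q v)
    (hQcent : ∀ v, ballStab Γ G v 1 ⊓ Subgroup.centralizer (Q v : Set G) ≤ Q v)
    (Sxy : Subgroup G)
    (hSle : Sxy ≤ MulAction.stabilizer G x ⊓ MulAction.stabilizer G y)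
    (hSp : IsPGroup p Sxy)
    (hSnorm : ∀ g ∈ MulAction.stabilizer G x ⊓ MulAction.stabilizer G y,
      ∀ k ∈ Sxy, g * k * g⁻¹ ∈ Sxy)
    (hSmax : ∀ R : Subgroup G, R ≤ MulAction.stabilizer G x ⊓ MulAction.stabilizer G y →
      IsPGroup p R →
      (∀ g ∈ MulAction.stabilizer G x ⊓ MulAction.stabilizer G y, ∀ k ∈ R, g * k * g⁻¹ ∈ R) →
      R ≤ Sxy)
    (hScent : (MulAction.stabilizer G x ⊓ MulAction.stabilizer G y) ⊓
      Subgroup.centralizer (Sxy : Set G) ≤ Sxy) :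
    (Sxy : Set G) = (Q x : Set G) * (Q y : Set G) := by
  classical
  obtain ⟨hA, htrans, hlocal⟩ := hloc
  have hyx : Γ.Adj y x := hxy.symm
  have hBxx : ballStab Γ G x 1 ≤ MulAction.stabilizer G x :=
    Stmt10Aux.ballStab_le_stabilizer hconn x x (Or.inl rfl)
  have hBxy : ballStab Γ G x 1 ≤ MulAction.stabilizer G y :=
    Stmt10Aux.ballStab_le_stabilizer hconn x y (Or.inr hxy)
  have hByx : ballStab Γ G y 1 ≤ MulAction.stabilizer G x :=
    Stmt10Aux.ballStab_le_stabilizer hconn y x (Or.inr hyx)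
  have hByy : ballStab Γ G y 1 ≤ MulAction.stabilizer G y :=
    Stmt10Aux.ballStab_le_stabilizer hconn y y (Or.inl rfl)
  -- conjugation of the groups Q
  have hQconj : ∀ (g : G) (v : V), ∀ h ∈ Q v, g * h * g⁻¹ ∈ Q (g • v) := by
    intro g v
    have hle1 : Subgroup.map (MulAut.conj g).toMonoidHom (Q v) ≤ ballStab Γ G (g • v) 1 := by
      rintro r hr
      rw [Subgroup.mem_map] at hr
      obtain ⟨q, hq, rfl⟩ := hr
      have := Stmt10Aux.ballStab_conj hA hconn g q v (hQle v hq)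
      simpa using this
    have hp1 : IsPGroup p (Subgroup.map (MulAut.conj g).toMonoidHom (Q v)) :=
      (hQp v).map _
    have hn1 : ∀ h' ∈ ballStab Γ G (g • v) 1,
        ∀ k ∈ Subgroup.map (MulAut.conj g).toMonoidHom (Q v),
        h' * k * h'⁻¹ ∈ Subgroup.map (MulAut.conj g).toMonoidHom (Q v) := by
      intro h' hh' k hk
      rw [Subgroup.mem_map] at hk ⊢
      obtain ⟨q, hq, rfl⟩ := hk
      have hh'' : g⁻¹ * h' * g ∈ ballStab Γ G v 1 := by
        have := Stmt10Aux.ballStab_conj hA hconn g⁻¹ h' (g • v) hh'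
        rwa [inv_smul_smul] at this
      refine ⟨(g⁻¹ * h' * g) * q * (g⁻¹ * h' * g)⁻¹, hQnorm v _ hh'' q hq, ?_⟩
      simp only [MulAut.conj_apply, MulEquiv.coe_toMonoidHom]
      group
    have hfin := hQmax (g • v) _ hle1 hp1 hn1
    intro h hh
    have hmem : (MulAut.conj g).toMonoidHom h ∈ Subgroup.map (MulAut.conj g).toMonoidHom (Q v) :=
      Subgroup.mem_map_of_mem _ hh
    have := hfin hmem
    simpa only [MulAut.conj_apply, MulEquiv.coe_toMonoidHom] using this
  have hQconj_iff : ∀ (g : G) (v : V) (h : G), h ∈ Q v ↔ g * h * g⁻¹ ∈ Q (g • v) := by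
    intro g v h
    constructor
    · exact hQconj g v h
    · intro hh
      have := hQconj g⁻¹ (g • v) _ hh
      rwa [inv_smul_smul, show g⁻¹ * (g * h * g⁻¹) * g⁻¹⁻¹ = h by group] at this
  -- K := G_{xy}^{[1]} is contained in both Q x and Q y
  have hKQx : ballStab Γ G x 1 ⊓ ballStab Γ G y 1 ≤ Q x := by
    apply hQmax x _ inf_le_left hpgrp
    intro g hg k hk
    rw [Subgroup.mem_inf] at hk ⊢
    refine ⟨mul_mem (mul_mem hg hk.1) (inv_mem hg), ?_⟩
    have := Stmt10Aux.ballStab_conj hA hconn g k y hk.2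
    rwa [MulAction.mem_stabilizer_iff.mp (hBxy hg)] at this
  have hKQy : ballStab Γ G x 1 ⊓ ballStab Γ G y 1 ≤ Q y := by
    apply hQmax y _ inf_le_right hpgrp
    intro g hg k hk
    rw [Subgroup.mem_inf] at hk ⊢
    refine ⟨?_, mul_mem (mul_mem hg hk.2) (inv_mem hg)⟩
    have := Stmt10Aux.ballStab_conj hA hconn g k x hk.1
    rwa [MulAction.mem_stabilizer_iff.mp (hByx hg)] at this
  -- Q x and Q y are contained in Sxy
  have hQxS : Q x ≤ Sxy := by
    apply hSmax _ (le_inf (le_trans (hQle x) hBxx) (le_trans (hQle x) hBxy)) (hQp x)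
    intro g hg k hk
    rw [Subgroup.mem_inf] at hg
    have := hQconj g x k hk
    rwa [MulAction.mem_stabilizer_iff.mp hg.1] at this
  have hQyS : Q y ≤ Sxy := by
    apply hSmax _ (le_inf (le_trans (hQle y) hByx) (le_trans (hQle y) hByy)) (hQp y)
    intro g hg k hk
    rw [Subgroup.mem_inf] at hg
    have := hQconj g y k hk
    rwa [MulAction.mem_stabilizer_iff.mp hg.2] at this
  -- Sxy ∩ G_x^{[1]} ≤ Q x
  have hSBx : Sxy ⊓ ballStab Γ G x 1 ≤ Q x := by
    apply hQmax x _ inf_le_right (hSp.to_le inf_le_left)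
    intro g hg k hk
    rw [Subgroup.mem_inf] at hk ⊢
    exact ⟨hSnorm g (Subgroup.mem_inf.mpr ⟨hBxx hg, hBxy hg⟩) k hk.1,
      mul_mem (mul_mem hg hk.2) (inv_mem hg)⟩
  -- local action at x
  obtain ⟨e, φ, hsurj, hcomp⟩ := hlocal x
  have hyn : y ∈ Γ.neighborSet x := hxy
  set ω : OPairs n := e ⟨y, hyn⟩ with hω
  -- the kernel of the local action at x is G_x^{[1]}
  have hker : ∀ (g : G) (hg : g ∈ MulAction.stabilizer G x),
      (φ ⟨g, hg⟩ = 1 ↔ g ∈ ballStab Γ G x 1) := by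
    intro g hg
    constructor
    · intro h1
      rw [Stmt10Aux.mem_ballStab_iff hconn]
      rintro w (rfl | hw)
      · exact MulAction.mem_stabilizer_iff.mp hg
      · have h2 := hcomp ⟨g, hg⟩ ⟨w, hw⟩
        rw [h1, one_smul, Equiv.symm_apply_apply] at h2
        exact h2.symm
    · intro hB
      have hfixq : ∀ q : OPairs n, φ ⟨g, hg⟩ • q = q := by
        intro q
        have h2 := hcomp ⟨g, hg⟩ (e.symm q)
        rw [Equiv.apply_symm_apply] at h2
        have h3 : (g : G) • ((e.symm q : Γ.neighborSet x) : V)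
            = ((e.symm q : Γ.neighborSet x) : V) :=
          (Stmt10Aux.mem_ballStab_iff hconn g x).mp hB _ (Or.inr (e.symm q).2)
        have h4 : ((e.symm (φ ⟨g, hg⟩ • q) : Γ.neighborSet x) : V)
            = ((e.symm q : Γ.neighborSet x) : V) := h2.trans h3
        exact e.symm.injective (Subtype.coe_injective h4)
      apply Equiv.ext
      intro i
      obtain ⟨j, hj⟩ : ∃ j : Fin n, j ≠ i :=
        Fintype.exists_ne_of_one_lt_card (by rw [Fintype.card_fin]; omega) i
      have := hfixq ⟨(i, j), Ne.symm hj⟩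
      rw [Stmt10Aux.opairs_smul_eq_iff] at this
      exact this.1
  -- elements of G_{xy} fix the pair ω
  have hfixab : ∀ (g : G) (hgx : g ∈ MulAction.stabilizer G x), g ∈ MulAction.stabilizer G y →
      φ ⟨g, hgx⟩ ω.1.1 = ω.1.1 ∧ φ ⟨g, hgx⟩ ω.1.2 = ω.1.2 := by
    intro g hgx hgy
    rw [← Stmt10Aux.opairs_smul_eq_iff]
    have h2 := hcomp ⟨g, hgx⟩ ⟨y, hyn⟩
    rw [← hω] at h2
    have h3 : (g : G) • y = y := MulAction.mem_stabilizer_iff.mp hgy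
    have h4 : ((e.symm (φ ⟨g, hgx⟩ • ω) : Γ.neighborSet x) : V)
        = ((⟨y, hyn⟩ : Γ.neighborSet x) : V) := h2.trans h3
    have h5 := Subtype.coe_injective h4
    have h6 := congrArg e h5
    rw [Equiv.apply_symm_apply] at h6
    rw [h6, hω]
  -- lifting permutations fixing ω to G_{xy}
  have hlift : ∀ σ : Equiv.Perm (Fin n), σ ω.1.1 = ω.1.1 → σ ω.1.2 = ω.1.2 →
      ∃ (g : G) (hg : g ∈ MulAction.stabilizer G x),
        g ∈ MulAction.stabilizer G y ∧ φ ⟨g, hg⟩ = σ := by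
    intro σ h1 h2
    obtain ⟨g', hgσ⟩ := hsurj σ
    refine ⟨(g' : G), g'.2, ?_, ?_⟩
    · have h3 := hcomp g' ⟨y, hyn⟩
      rw [← hω, hgσ, Stmt10Aux.opairs_smul_eq_of σ ω ω h1 h2] at h3
      have h5 : (e.symm ω : Γ.neighborSet x) = ⟨y, hyn⟩ := by
        rw [hω, Equiv.symm_apply_apply]
      rw [h5] at h3
      exact MulAction.mem_stabilizer_iff.mpr h3.symm
    · have h7 : (⟨(g' : G), g'.2⟩ : MulAction.stabilizer G x) = g' := rfl
      rw [h7]; exact hgσ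
  -- images of Sxy and Q y in the local action at x
  set N : Subgroup (Equiv.Perm (Fin n)) :=
    Subgroup.map φ (Sxy.subgroupOf (MulAction.stabilizer G x)) with hNdef
  set M : Subgroup (Equiv.Perm (Fin n)) :=
    Subgroup.map φ ((Q y).subgroupOf (MulAction.stabilizer G x)) with hMdef
  have hmemN : ∀ σ : Equiv.Perm (Fin n),
      σ ∈ N ↔ ∃ g : MulAction.stabilizer G x, (g : G) ∈ Sxy ∧ φ g = σ := by
    intro σ
    rw [hNdef, Subgroup.mem_map]
    constructor
    · rintro ⟨g, hg1, hg2⟩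
      exact ⟨g, Subgroup.mem_subgroupOf.mp hg1, hg2⟩
    · rintro ⟨g, hg1, hg2⟩
      exact ⟨g, Subgroup.mem_subgroupOf.mpr hg1, hg2⟩
  have hmemM : ∀ σ : Equiv.Perm (Fin n),
      σ ∈ M ↔ ∃ g : MulAction.stabilizer G x, (g : G) ∈ Q y ∧ φ g = σ := by
    intro σ
    rw [hMdef, Subgroup.mem_map]
    constructor
    · rintro ⟨g, hg1, hg2⟩
      exact ⟨g, Subgroup.mem_subgroupOf.mp hg1, hg2⟩
    · rintro ⟨g, hg1, hg2⟩
      exact ⟨g, Subgroup.mem_subgroupOf.mpr hg1, hg2⟩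
  have hNfix : ∀ σ ∈ N, σ ω.1.1 = ω.1.1 ∧ σ ω.1.2 = ω.1.2 := by
    intro σ hσ
    obtain ⟨g, hgS, rfl⟩ := (hmemN σ).mp hσ
    exact hfixab (g : G) g.2 (Subgroup.mem_inf.mp (hSle hgS)).2
  have hMfix : ∀ σ ∈ M, σ ω.1.1 = ω.1.1 ∧ σ ω.1.2 = ω.1.2 := by
    intro σ hσ
    obtain ⟨g, hgQ, rfl⟩ := (hmemM σ).mp hσ
    exact hfixab (g : G) g.2 (hByy (hQle y hgQ))
  have hNpow : ∀ σ ∈ N, ∃ k, σ ^ p ^ k = 1 := by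
    intro σ hσ
    obtain ⟨g, hgS, rfl⟩ := (hmemN σ).mp hσ
    obtain ⟨k, hk⟩ := hSp ⟨(g : G), hgS⟩
    refine ⟨k, ?_⟩
    have hk2 : (g : G) ^ p ^ k = 1 := by
      have := congrArg Subtype.val hk
      simpa using this
    have hk3 : g ^ p ^ k = 1 := by
      apply Subtype.ext
      simpa using hk2
    rw [← map_pow, hk3, map_one]
  have hMpow : ∀ σ ∈ M, ∃ k, σ ^ p ^ k = 1 := by
    intro σ hσ
    obtain ⟨g, hgQ, rfl⟩ := (hmemM σ).mp hσ
    obtain ⟨k, hk⟩ := hQp y ⟨(g : G), hgQ⟩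
    refine ⟨k, ?_⟩
    have hk2 : (g : G) ^ p ^ k = 1 := by
      have := congrArg Subtype.val hk
      simpa using this
    have hk3 : g ^ p ^ k = 1 := by
      apply Subtype.ext
      simpa using hk2
    rw [← map_pow, hk3, map_one]
  have hNnorm : ∀ σ : Equiv.Perm (Fin n), σ ω.1.1 = ω.1.1 → σ ω.1.2 = ω.1.2 →
      ∀ τ ∈ N, σ * τ * σ⁻¹ ∈ N := by
    intro σ h1 h2 τ hτ
    obtain ⟨g, hgS, rfl⟩ := (hmemN τ).mp hτ
    obtain ⟨h, hhx, hhy, hφh⟩ := hlift σ h1 h2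
    refine (hmemN _).mpr ⟨⟨h, hhx⟩ * g * ⟨h, hhx⟩⁻¹, ?_, ?_⟩
    · have heq : ((⟨h, hhx⟩ * g * ⟨h, hhx⟩⁻¹ : MulAction.stabilizer G x) : G)
          = h * (g : G) * h⁻¹ := rfl
      rw [heq]
      exact hSnorm h (Subgroup.mem_inf.mpr ⟨hhx, hhy⟩) _ hgS
    · rw [map_mul, map_mul, map_inv, hφh]
  have hMnorm : ∀ σ : Equiv.Perm (Fin n), σ ω.1.1 = ω.1.1 → σ ω.1.2 = ω.1.2 →
      ∀ τ ∈ M, σ * τ * σ⁻¹ ∈ M := by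
    intro σ h1 h2 τ hτ
    obtain ⟨g, hgQ, rfl⟩ := (hmemM τ).mp hτ
    obtain ⟨h, hhx, hhy, hφh⟩ := hlift σ h1 h2
    refine (hmemM _).mpr ⟨⟨h, hhx⟩ * g * ⟨h, hhx⟩⁻¹, ?_, ?_⟩
    · have heq : ((⟨h, hhx⟩ * g * ⟨h, hhx⟩⁻¹ : MulAction.stabilizer G x) : G)
          = h * (g : G) * h⁻¹ := rfl
      rw [heq]
      have := hQconj h y _ hgQ
      rwa [MulAction.mem_stabilizer_iff.mp hhy] at this
    · rw [map_mul, map_mul, map_inv, hφh]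
  by_cases hMbot : M = ⊥
  · -- Q y acts trivially on Γ(x): contradiction with connectivity and hne
    exfalso
    have hQyBx : Q y ≤ ballStab Γ G x 1 := by
      intro q hq
      have hqx : q ∈ MulAction.stabilizer G x := hByx (hQle y hq)
      have hmm : φ ⟨q, hqx⟩ ∈ M := (hmemM _).mpr ⟨⟨q, hqx⟩, hq, rfl⟩
      rw [hMbot, Subgroup.mem_bot] at hmm
      exact (hker q hqx).mp hmm
    have hQyK : Q y = ballStab Γ G x 1 ⊓ ballStab Γ G y 1 :=
      le_antisymm (le_inf hQyBx (hQle y)) hKQy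
    have harc : ∀ u v : V, Γ.Adj u v → ∃ g : G, g • x = u ∧ g • y = v := by
      intro u v huv
      obtain ⟨t, ht⟩ := htrans.exists_smul_eq x u
      obtain ⟨f, ψ, hψsurj, hψcomp⟩ := hlocal u
      have htyu : Γ.Adj u (t • y) := by
        rw [← ht]
        exact (Stmt10Aux.adj_smul hA t x y).mp hxy
      set q1 : OPairs n := f ⟨t • y, htyu⟩ with hq1
      set q2 : OPairs n := f ⟨v, huv⟩ with hq2
      obtain ⟨σ, hσ1, hσ2⟩ :=
        Stmt10Aux.exists_perm_pair q1.1.1 q1.1.2 q2.1.1 q2.1.2 q1.2 q2.2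
      obtain ⟨h', hφ'⟩ := hψsurj σ
      refine ⟨(h' : G) * t, ?_, ?_⟩
      · rw [mul_smul, ht]
        exact MulAction.mem_stabilizer_iff.mp h'.2
      · rw [mul_smul]
        have h3 := hψcomp h' ⟨t • y, htyu⟩
        rw [← hq1, hφ', Stmt10Aux.opairs_smul_eq_of σ q1 q2 hσ1 hσ2] at h3
        have h5 : (f.symm q2 : Γ.neighborSet u) = ⟨v, huv⟩ := by
          rw [hq2, Equiv.symm_apply_apply]
        rw [h5] at h3
        exact h3.symm
    obtain ⟨g0, hg0x, hg0y⟩ := harc y x hyx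
    have hKconj : ∀ k : G, k ∈ ballStab Γ G x 1 ⊓ ballStab Γ G y 1 →
        g0 * k * g0⁻¹ ∈ ballStab Γ G x 1 ⊓ ballStab Γ G y 1 := by
      intro k hk
      rw [Subgroup.mem_inf] at hk ⊢
      constructor
      · have := Stmt10Aux.ballStab_conj hA hconn g0 k y hk.2
        rwa [hg0y] at this
      · have := Stmt10Aux.ballStab_conj hA hconn g0 k x hk.1
        rwa [hg0x] at this
    have hQxK : Q x = ballStab Γ G x 1 ⊓ ballStab Γ G y 1 := by
      apply le_antisymm _ hKQx
      intro h hh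
      have hz : g0⁻¹ * h * g0 ∈ Q y := by
        rw [hQconj_iff g0 y (g0⁻¹ * h * g0), hg0y,
          show g0 * (g0⁻¹ * h * g0) * g0⁻¹ = h by group]
        exact hh
      rw [hQyK] at hz
      have := hKconj _ hz
      rwa [show g0 * (g0⁻¹ * h * g0) * g0⁻¹ = h by group] at this
    have hQxy : Q x = Q y := hQxK.trans hQyK.symm
    have hQedge : ∀ u v : V, Γ.Adj u v → Q u = Q v := by
      intro u v huv
      obtain ⟨g1, hg1x, hg1y⟩ := harc u v huv
      ext h
      constructor
      · intro hh
        have hz : g1⁻¹ * h * g1 ∈ Q x := by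
          rw [hQconj_iff g1 x (g1⁻¹ * h * g1), hg1x,
            show g1 * (g1⁻¹ * h * g1) * g1⁻¹ = h by group]
          exact hh
        rw [hQxy] at hz
        have := (hQconj_iff g1 y _).mp hz
        rwa [hg1y, show g1 * (g1⁻¹ * h * g1) * g1⁻¹ = h by group] at this
      · intro hh
        have hz : g1⁻¹ * h * g1 ∈ Q y := by
          rw [hQconj_iff g1 y (g1⁻¹ * h * g1), hg1y,
            show g1 * (g1⁻¹ * h * g1) * g1⁻¹ = h by group]
          exact hh
        rw [← hQxy] at hz
        have := (hQconj_iff g1 x _).mp hz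
        rwa [hg1x, show g1 * (g1⁻¹ * h * g1) * g1⁻¹ = h by group] at this
    have hQwalk : ∀ (u v : V) (w : Γ.Walk u v), Q u = Q v := by
      intro u v w
      induction w with
      | nil => rfl
      | cons h _ ih => exact (hQedge _ _ h).trans ih
    have hQall : ∀ v : V, Q x = Q v := fun v => (hconn x v).elim fun w => hQwalk x v w
    apply hne
    rw [Subgroup.eq_bot_iff_forall]
    intro k hk
    have hkQ : k ∈ Q x := hKQx hk
    have hfixall : ∀ v : V, (k : Equiv.Perm V) v = v := by
      intro v
      have hkv : k ∈ Q v := (hQall v) ▸ hkQ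
      have : k ∈ MulAction.stabilizer G v :=
        Stmt10Aux.ballStab_le_stabilizer hconn v v (Or.inl rfl) (hQle v hkv)
      exact MulAction.mem_stabilizer_iff.mp this
    apply Subtype.ext
    exact Equiv.ext hfixall
  · -- the image of Q y on Γ(x) is nontrivial; use the structure of Sym(n-2)
    have hMne : ∃ u ∈ M, u ≠ 1 := by
      by_contra hcon
      push_neg at hcon
      apply hMbot
      rw [Subgroup.eq_bot_iff_forall]
      exact hcon
    have hNM : N ≤ M := by
      rcases hnp with ⟨hn4, hp2⟩ | ⟨hn5, hp3⟩ | ⟨hn6, hp2⟩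
      · exact Stmt10Aux.key4 ω.2 hn4 hNfix hMfix hMne
      · subst hp3
        exact Stmt10Aux.key5 ω.2 hn5 hNfix hMfix hNpow hMpow hMne
      · subst hp2
        exact Stmt10Aux.key6 ω.2 hn6 hNfix hMfix hNpow hMpow hNnorm hMnorm hMne
    ext g
    simp only [Set.mem_mul, SetLike.mem_coe]
    constructor
    · intro hgS
      have hgx : g ∈ MulAction.stabilizer G x := (Subgroup.mem_inf.mp (hSle hgS)).1
      have hσN : φ ⟨g, hgx⟩ ∈ N := (hmemN _).mpr ⟨⟨g, hgx⟩, hgS, rfl⟩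
      obtain ⟨q, hqQ, hq⟩ := (hmemM _).mp (hNM hσN)
      have hone : φ (⟨g, hgx⟩ * q⁻¹) = 1 := by
        rw [map_mul, map_inv, hq]
        group
      have hz2 : ((⟨g, hgx⟩ * q⁻¹ : MulAction.stabilizer G x) : G) ∈ ballStab Γ G x 1 :=
        (hker _ (⟨g, hgx⟩ * q⁻¹ : MulAction.stabilizer G x).2).mp hone
      have hz3 : g * (q : G)⁻¹ ∈ Sxy ⊓ ballStab Γ G x 1 :=
        Subgroup.mem_inf.mpr ⟨mul_mem hgS (inv_mem (hQyS hqQ)), hz2⟩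
      refine ⟨g * (q : G)⁻¹, hSBx hz3, q, hqQ, ?_⟩
      group
    · rintro ⟨q1, hq1, q2, hq2, rfl⟩
      exact mul_mem (hQxS hq1) (hQyS hq2)
end
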